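/- arXiv:0712.4118 — 10 statements merged into one kernel-verified Lean document; each statement's English description precedes it below -/
import Mathlib

section
/- A graph G is chordal if and only if there exists an ordering ν on its vertex set (a bijection to {1,...,|V|}) such that for any three vertices u, v, w with ν(u) < ν(w) and ν(v) < ν(w), if uw and vw are both edges then uv is an edge. -/
open SimpleGraph

/-- A graph is chordal if it has no induced cycle of length at least four. -/
def IsChordal {V : Type*} (G : SimpleGraph V) : Prop :=
  ∀ n : ℕ, 4 ≤ n → ∀ f : Fin n → V, Function.Injective f →
    ¬ (∀ i j : Fin n, G.Adj (f i) (f j) ↔ (j.val = (i.val + 1) % n ∨ i.val = (j.val + 1) % n))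

/-- Perfect elimination ordering. -/
def IsPEO {V : Type*} {n : ℕ} (H : SimpleGraph V) (ν : V ≃ Fin n) : Prop :=
  ∀ u v w : V, u ≠ v → ν u < ν w → ν v < ν w → H.Adj u w → H.Adj v w → H.Adj u v

/-- The two edge sets of a signed graph are disjoint (a partition of the edge set). -/
def SDisjoint {V : Type*} (G : Bool → SimpleGraph V) : Prop :=
  ∀ u v : V, ¬ ((G true).Adj u v ∧ (G false).Adj u v)

/-- Signed elimination ordering: conditions (E1) and (E2). -/
def IsSEO {V : Type*} {n : ℕ} (G : Bool → SimpleGraph V) (ν : V ≃ Fin n) : Prop :=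
  ∀ u v w : V, u ≠ v → ν u < ν w → ν v < ν w → ∀ σ : Bool,
    ((G σ).Adj u w → (G σ).Adj v w → (G σ).Adj u v) ∧
    ((G σ).Adj u v → (G (!σ)).Adj v w → (G σ).Adj u w)

/-- A signed graph is signed-eliminable if it admits a signed elimination ordering. -/
def SignedEliminable {V : Type*} (G : Bool → SimpleGraph V) : Prop :=
  ∃ (n : ℕ) (ν : V ≃ Fin n), IsSEO G ν

/-- Signed-simplicial vertex: conditions (S1) and (S2). -/
def SignedSimplicial {V : Type*} (G : Bool → SimpleGraph V) (v : V) : Prop :=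
  (∀ σ : Bool, (G σ).IsClique (insert v ((G σ).neighborSet v))) ∧
  (∀ σ : Bool, ∀ u w : V, (G (!σ)).Adj u w → (G σ).Adj w v → (G (!σ)).Adj u v)


namespace ChordalAux
open Relation

universe u
variable {V : Type u}



lemma rtg_walk {r : V → V → Prop} {x y : V} (h : ReflTransGen r x y) :
    ∃ (ℓ : ℕ) (p : ℕ → V), p 0 = x ∧ p ℓ = y ∧ ∀ i < ℓ, r (p i) (p (i+1)) := by
  induction h with
  | refl => exact ⟨0, fun _ => x, rfl, rfl, by omega⟩
  | @tail b c hab hbc ih =>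
    obtain ⟨ℓ, p, hp0, hpl, hpe⟩ := ih
    refine ⟨ℓ+1, fun t => if t ≤ ℓ then p t else c, by simp [hp0], by simp, ?_⟩
    intro i hi
    rcases Nat.lt_or_ge i ℓ with h' | h'
    · simpa [Nat.le_of_lt h', Nat.succ_le_of_lt h'] using hpe i h'
    · have hi' : i = ℓ := by omega
      subst hi'
      simp only [le_refl, if_pos, if_neg (by omega : ¬ i + 1 ≤ i)]
      rwa [hpl]

lemma rtg_symm {r : V → V → Prop} (hs : Symmetric r) {a b : V}
    (h : ReflTransGen r a b) : ReflTransGen r b a := by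
  induction h with
  | refl => exact .refl
  | tail _ hstep ih => exact ReflTransGen.trans (.single (hs hstep)) ih

lemma walk_shorten_dup {r : V → V → Prop} {p : ℕ → V} {ℓ i j : ℕ}
    (hij : i < j) (hjl : j ≤ ℓ) (hdup : p i = p j)
    (he : ∀ t < ℓ, r (p t) (p (t+1))) :
    ∃ (ℓ' : ℕ) (q : ℕ → V), ℓ' < ℓ ∧ q 0 = p 0 ∧ q ℓ' = p ℓ ∧
      ∀ t < ℓ', r (q t) (q (t+1)) := by
  set d := j - i with hd
  refine ⟨ℓ - d, fun t => if t ≤ i then p t else p (t + d), by omega, by simp, ?_, ?_⟩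
  · show (if ℓ - d ≤ i then p (ℓ - d) else p (ℓ - d + d)) = p ℓ
    by_cases hcase : ℓ - d ≤ i
    · have hj : j = ℓ := by omega
      have : ℓ - d = i := by omega
      rw [this]; simp only [le_refl, if_pos]
      rw [hdup, hj]
    · simp only [if_neg hcase]
      congr 1; omega
  · intro t ht
    show r (if t ≤ i then p t else p (t + d)) (if t + 1 ≤ i then p (t+1) else p (t + 1 + d))
    rcases Nat.lt_or_ge t i with h' | h'
    · rw [if_pos (by omega), if_pos (by omega)]
      exact he t (by omega)
    · have hqt : (if t ≤ i then p t else p (t + d)) = p (t + d) := by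
        rcases Nat.eq_or_lt_of_le h' with h'' | h''
        · have hti : t = i := h''.symm
          rw [if_pos (by omega), hti, hdup]
          congr 1; omega
        · rw [if_neg (by omega)]
      rw [hqt, if_neg (by omega : ¬ (t + 1 ≤ i))]
      have h3 : t + 1 + d = t + d + 1 := by omega
      rw [h3]
      exact he (t + d) (by omega)

lemma walk_shorten_chord {r : V → V → Prop} {p : ℕ → V} {ℓ i j : ℕ}
    (hij : i + 1 < j) (hjl : j ≤ ℓ) (hchord : r (p i) (p j))
    (he : ∀ t < ℓ, r (p t) (p (t+1))) :
    ∃ (ℓ' : ℕ) (q : ℕ → V), ℓ' < ℓ ∧ q 0 = p 0 ∧ q ℓ' = p ℓ ∧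
      ∀ t < ℓ', r (q t) (q (t+1)) := by
  set d := j - i - 1 with hd
  refine ⟨ℓ - d, fun t => if t ≤ i then p t else p (t + d), by omega, by simp, ?_, ?_⟩
  · show (if ℓ - d ≤ i then p (ℓ - d) else p (ℓ - d + d)) = p ℓ
    rw [if_neg (by omega)]
    congr 1; omega
  · intro t ht
    show r (if t ≤ i then p t else p (t + d)) (if t + 1 ≤ i then p (t+1) else p (t + 1 + d))
    rcases Nat.lt_or_ge t i with h' | h'
    · rw [if_pos (by omega), if_pos (by omega)]
      exact he t (by omega)
    · rcases Nat.eq_or_lt_of_le h' with h'' | h''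
      · have hti : t = i := h''.symm
        rw [if_pos (by omega), if_neg (by omega)]
        have h3 : t + 1 + d = j := by omega
        rw [h3, hti]
        exact hchord
      · rw [if_neg (by omega), if_neg (by omega)]
        have : t + 1 + d = t + d + 1 := by omega
        rw [this]
        exact he (t + d) (by omega)

lemma exists_min_walk {r : V → V → Prop} {x y : V} (h : ReflTransGen r x y)
    (hxy : x ≠ y) (hnr : ¬ r x y) :
    ∃ (ℓ : ℕ) (p : ℕ → V), 2 ≤ ℓ ∧ p 0 = x ∧ p ℓ = y ∧
      (∀ i < ℓ, r (p i) (p (i+1))) ∧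
      (∀ i j, i ≤ ℓ → j ≤ ℓ → p i = p j → i = j) ∧
      (∀ i j, i + 1 < j → j ≤ ℓ → ¬ r (p i) (p j)) := by
  classical
  have hex : ∃ ℓ : ℕ, ∃ p : ℕ → V, p 0 = x ∧ p ℓ = y ∧ ∀ i < ℓ, r (p i) (p (i+1)) := by
    obtain ⟨ℓ, p, h1, h2, h3⟩ := rtg_walk h
    exact ⟨ℓ, p, h1, h2, h3⟩
  set ℓ := Nat.find hex with hℓ
  obtain ⟨p, hp0, hpl, hpe⟩ := Nat.find_spec hex
  rw [← hℓ] at hpl hpe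
  have hshort : ∀ (ℓ' : ℕ) (q : ℕ → V), ℓ' < ℓ → q 0 = x → q ℓ' = y →
      (∀ t < ℓ', r (q t) (q (t+1))) → False := by
    intro ℓ' q hlt hq0 hql hqe
    exact Nat.find_min hex hlt ⟨q, hq0, hql, hqe⟩
  have hne0 : ℓ ≠ 0 := by
    intro h0
    apply hxy
    rw [← hp0, ← hpl, h0]
  have hne1 : ℓ ≠ 1 := by
    intro h1
    apply hnr
    have h2 : p 1 = y := by rw [← h1]; exact hpl
    have := hpe 0 (by omega)
    rwa [hp0, h2] at this
  have hinj : ∀ i j, i ≤ ℓ → j ≤ ℓ → p i = p j → i = j := by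
    intro i j hi hj hpij
    by_contra hne'
    rcases Nat.lt_or_ge i j with hlt | hge
    · obtain ⟨ℓ', q, h1', h2', h3', h4'⟩ := walk_shorten_dup hlt hj hpij hpe
      exact hshort ℓ' q h1' (by rw [h2', hp0]) (by rw [h3', hpl]) h4'
    · have hlt : j < i := by omega
      obtain ⟨ℓ', q, h1', h2', h3', h4'⟩ := walk_shorten_dup hlt hi hpij.symm hpe
      exact hshort ℓ' q h1' (by rw [h2', hp0]) (by rw [h3', hpl]) h4'
  have hchord : ∀ i j, i + 1 < j → j ≤ ℓ → ¬ r (p i) (p j) := by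
    intro i j hij hj hadj
    obtain ⟨ℓ', q, h1', h2', h3', h4'⟩ := walk_shorten_chord hij hj hadj hpe
    exact hshort ℓ' q h1' (by rw [h2', hp0]) (by rw [h3', hpl]) h4'
  exact ⟨ℓ, p, by omega, hp0, hpl, hpe, hinj, hchord⟩

lemma glue {G : SimpleGraph V} (hG : IsChordal G) {x y : V} (hxy : x ≠ y) (hnadj : ¬ G.Adj x y)
    {p q : ℕ → V} {l1 l2 : ℕ} (h1 : 2 ≤ l1) (h2 : 2 ≤ l2)
    (hp0 : p 0 = x) (hpl : p l1 = y) (hq0 : q 0 = y) (hql : q l2 = x)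
    (hpinj : ∀ i j, i ≤ l1 → j ≤ l1 → p i = p j → i = j)
    (hqinj : ∀ i j, i ≤ l2 → j ≤ l2 → q i = q j → i = j)
    (hpe : ∀ i < l1, G.Adj (p i) (p (i+1)))
    (hqe : ∀ i < l2, G.Adj (q i) (q (i+1)))
    (hpind : ∀ i j, i + 1 < j → j ≤ l1 → ¬ G.Adj (p i) (p j))
    (hqind : ∀ i j, i + 1 < j → j ≤ l2 → ¬ G.Adj (q i) (q j))
    (hcross : ∀ i j, 0 < i → i < l1 → 0 < j → j < l2 → ¬ G.Adj (p i) (q j) ∧ p i ≠ q j) :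
    False := by
  classical
  set n := l1 + l2 with hn
  set c : ℕ → V := fun t => if t ≤ l1 then p t else q (t - l1) with hc
  have hcp : ∀ t, t ≤ l1 → c t = p t := fun t ht => if_pos ht
  have hcq : ∀ t, l1 ≤ t → c t = q (t - l1) := by
    intro t ht
    rcases Nat.eq_or_lt_of_le ht with h' | h'
    · rw [← h']
      show c l1 = q (l1 - l1)
      rw [hcp l1 le_rfl, hpl, Nat.sub_self, hq0]
    · exact if_neg (by omega)
  have hmain : ∀ i j, i < j → j < n → c i = c j → False := by
    intro i j hij hjn hcij
    rcases le_or_gt j l1 with hA | hA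
    · rw [hcp i (by omega), hcp j hA] at hcij
      exact absurd (hpinj i j (by omega) hA hcij) (by omega)
    · rcases le_or_gt i l1 with hC | hB
      · rw [hcp i hC, hcq j (by omega)] at hcij
        by_cases hi0 : i = 0
        · rw [hi0, hp0, ← hql] at hcij
          have := hqinj l2 (j - l1) le_rfl (by omega) hcij
          omega
        · by_cases hil : i = l1
          · rw [hil, hpl, ← hq0] at hcij
            have := hqinj 0 (j - l1) (by omega) (by omega) hcij
            omega
          · exact (hcross i (j - l1) (by omega) (by omega) (by omega) (by omega)).2 hcij
      · rw [hcq i (by omega), hcq j (by omega)] at hcij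
        have := hqinj (i - l1) (j - l1) (by omega) (by omega) hcij
        omega
  have hedge : ∀ i, i < n → G.Adj (c i) (c ((i+1) % n)) := by
    intro i hin
    rcases Nat.lt_or_ge (i+1) n with hlt | hge
    · rw [Nat.mod_eq_of_lt hlt]
      rcases le_or_gt (i+1) l1 with hA | hB
      · rw [hcp i (by omega), hcp (i+1) hA]; exact hpe i (by omega)
      · rw [hcq i (by omega), hcq (i+1) (by omega)]
        have h3 : i + 1 - l1 = (i - l1) + 1 := by omega
        rw [h3]; exact hqe (i - l1) (by omega)
    · have h3 : i + 1 = n := by omega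
      rw [h3, Nat.mod_self, hcp 0 (by omega), hp0, ← hql, hcq i (by omega)]
      have h4 : l2 = (i - l1) + 1 := by omega
      rw [h4]
      exact hqe (i - l1) (by omega)
  have hmain2 : ∀ i j, i < j → j < n → G.Adj (c i) (c j) →
      j = i + 1 ∨ (i = 0 ∧ j = n - 1) := by
    intro i j hij hjn hadj
    rcases le_or_gt j l1 with hA | hA
    · left
      rw [hcp i (by omega), hcp j hA] at hadj
      by_contra hne
      exact hpind i j (by omega) hA hadj
    · rcases le_or_gt i l1 with hC | hB
      · by_cases hi0 : i = 0
        · rw [hcp i hC, hi0, hp0, ← hql, hcq j (by omega)] at hadj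
          right
          refine ⟨hi0, ?_⟩
          by_contra hne
          exact hqind (j - l1) l2 (by omega) le_rfl hadj.symm
        · by_cases hil : i = l1
          · left
            have e1 : c i = q 0 := by rw [hcq i (by omega), hil, Nat.sub_self]
            rw [e1, hcq j (by omega)] at hadj
            by_contra hne
            exact hqind 0 (j - l1) (by omega) (by omega) hadj
          · exfalso
            rw [hcp i hC, hcq j (by omega)] at hadj
            exact (hcross i (j - l1) (by omega) (by omega) (by omega) (by omega)).1 hadj
      · left
        rw [hcq i (by omega), hcq j (by omega)] at hadj
        by_contra hne
        exact hqind (i - l1) (j - l1) (by omega) (by omega) hadj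
  have hinj : Function.Injective (fun i : Fin n => c i.val) := by
    intro i j hij
    simp only at hij
    by_contra hne
    rcases lt_trichotomy i.val j.val with hlt | heq | hlt
    · exact hmain i.val j.val hlt j.isLt hij
    · exact hne (Fin.ext heq)
    · exact hmain j.val i.val hlt i.isLt hij.symm
  apply hG n (by omega) (fun i : Fin n => c i.val) hinj
  intro i j
  show G.Adj (c i.val) (c j.val) ↔ _
  constructor
  · intro hadj
    rcases lt_trichotomy i.val j.val with hlt | heq | hlt
    · rcases hmain2 i.val j.val hlt j.isLt hadj with h' | ⟨h0, h1⟩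
      · left; rw [Nat.mod_eq_of_lt (by omega)]; omega
      · right; rw [h1]
        have h5 : n - 1 + 1 = n := by omega
        rw [h5, Nat.mod_self]; exact h0
    · exfalso
      rw [show i.val = j.val from heq] at hadj
      exact G.loopless.irrefl _ hadj
    · rcases hmain2 j.val i.val hlt i.isLt hadj.symm with h' | ⟨h0, h1⟩
      · right; rw [Nat.mod_eq_of_lt (by omega)]; omega
      · left; rw [h1]
        have h5 : n - 1 + 1 = n := by omega
        rw [h5, Nat.mod_self]; exact h0
  · intro hor
    rcases hor with h' | h'
    · have h6 := hedge i.val i.isLt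
      rwa [← h'] at h6
    · have h6 := hedge j.val j.isLt
      rw [← h'] at h6
      exact h6.symm

def Hrel (G : SimpleGraph V) (S : Set V) : V → V → Prop :=
  fun u v => G.Adj u v ∧ u ∉ S ∧ v ∉ S

lemma hrel_symm (G : SimpleGraph V) (S : Set V) : Symmetric (Hrel G S) :=
  fun _ _ h => ⟨h.1.symm, h.2.2, h.2.1⟩

lemma rtg_not_mem {G : SimpleGraph V} {S : Set V} {a z : V} (ha : a ∉ S)
    (h : ReflTransGen (Hrel G S) a z) : z ∉ S := by
  induction h with
  | refl => exact ha
  | tail _ hstep _ => exact hstep.2.2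

lemma rtg_walk' {r : V → V → Prop} {x y : V} (h : ReflTransGen r x y) :
    ∃ (ℓ : ℕ) (p : ℕ → V), p 0 = x ∧ p ℓ = y ∧ ∀ i < ℓ, r (p i) (p (i+1)) := by
  induction h with
  | refl => exact ⟨0, fun _ => x, rfl, rfl, by omega⟩
  | @tail b c hab hbc ih =>
    obtain ⟨ℓ, p, hp0, hpl, hpe⟩ := ih
    refine ⟨ℓ+1, fun t => if t ≤ ℓ then p t else c, by simp [hp0], by simp, ?_⟩
    intro i hi
    rcases Nat.lt_or_ge i ℓ with h' | h'
    · simpa [Nat.le_of_lt h', Nat.succ_le_of_lt h'] using hpe i h'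
    · have hi' : i = ℓ := by omega
      subst hi'
      simp only [le_refl, if_pos, if_neg (by omega : ¬ i + 1 ≤ i)]
      rwa [hpl]

lemma reach_nbr {G : SimpleGraph V} {S : Set V} {s u : V} {ℓ : ℕ} {p : ℕ → V}
    (hu : u ∉ S) (hus : u ≠ s)
    (hp0 : p 0 = u) (hpe : ∀ i < ℓ, Hrel G (S \ {s}) (p i) (p (i+1)))
    (hhit : ∃ i, i ≤ ℓ ∧ p i = s) :
    ∃ z, G.Adj s z ∧ ReflTransGen (Hrel G S) u z := by
  classical
  set i0 := Nat.find hhit with hi0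
  obtain ⟨hi0l, hi0s⟩ := Nat.find_spec hhit
  rw [← hi0] at hi0l hi0s
  have hmin : ∀ m, m < i0 → ¬ (m ≤ ℓ ∧ p m = s) := fun m hm => Nat.find_min hhit hm
  have hpos : 0 < i0 := by
    rcases Nat.eq_zero_or_pos i0 with h0 | h0
    · exfalso; apply hus; rw [← hp0, ← hi0s, h0]
    · exact h0
  have hnot : ∀ t, t < i0 → p t ∉ S := by
    intro t ht
    by_cases ht0 : t = 0
    · rw [ht0, hp0]; exact hu
    · obtain ⟨_, _, h3⟩ := hpe (t-1) (by omega)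
      rw [show t - 1 + 1 = t by omega] at h3
      intro hS
      have hts : p t ≠ s := fun h => hmin t ht ⟨by omega, h⟩
      exact h3 ⟨hS, by simpa using hts⟩
  have hreach : ∀ t, t < i0 → ReflTransGen (Hrel G S) u (p t) := by
    intro t
    induction t with
    | zero => intro _; rw [← hp0]
    | succ t ih =>
      intro ht
      obtain ⟨hadj, _, _⟩ := hpe t (by omega)
      exact (ih (by omega)).tail ⟨hadj, hnot t (by omega), hnot (t+1) ht⟩
  refine ⟨p (i0 - 1), ?_, hreach (i0-1) (by omega)⟩
  have h5 := hpe (i0 - 1) (by omega)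
  rw [show i0 - 1 + 1 = i0 by omega, hi0s] at h5
  exact h5.1.symm

lemma exists_min_separator [Fintype V] {G : SimpleGraph V}
    {a b : V} (hab : a ≠ b) (hnadj : ¬ G.Adj a b) :
    ∃ S : Finset V, a ∉ (S : Set V) ∧ b ∉ (S : Set V) ∧
      ¬ ReflTransGen (Hrel G (S : Set V)) a b ∧
      (∀ s ∈ (S : Set V),
        (∃ z, G.Adj s z ∧ ReflTransGen (Hrel G (S : Set V)) a z) ∧
        (∃ z, G.Adj s z ∧ ReflTransGen (Hrel G (S : Set V)) b z)) := by
  classical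
  have hex : ∃ m : ℕ, ∃ S : Finset V,
      (a ∉ (S : Set V) ∧ b ∉ (S : Set V) ∧ ¬ ReflTransGen (Hrel G (S : Set V)) a b)
      ∧ S.card = m := by
    refine ⟨_, (Finset.univ.erase a).erase b, ⟨?_, ?_, ?_⟩, rfl⟩
    · simp
    · simp
    · intro hr
      rcases Relation.ReflTransGen.cases_head hr with heq | ⟨z, hz1, hz2⟩
      · exact hab heq
      · have hz := hz1.2.2
        simp only [Finset.coe_erase, Set.mem_diff, Set.mem_singleton_iff] at hz
        push_neg at hz
        by_cases hza : z = a
        · exact G.loopless.irrefl a (hza ▸ hz1.1)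
        · have hzb : z = b := hz (by simp [hza])
          exact hnadj (hzb ▸ hz1.1)
  set m0 := Nat.find hex with hm0
  obtain ⟨S, ⟨haS, hbS, hsep⟩, hcard⟩ := Nat.find_spec hex
  rw [← hm0] at hcard
  refine ⟨S, haS, hbS, hsep, ?_⟩
  intro s hs
  have hsF : s ∈ S := hs
  have hcard' : (S.erase s).card < m0 := by
    rw [← hcard]; exact Finset.card_erase_lt_of_mem hsF
  have hnot := Nat.find_min hex hcard'
  have hr : ReflTransGen (Hrel G ((S.erase s : Finset V) : Set V)) a b := by
    by_contra hr
    refine hnot ⟨S.erase s, ⟨?_, ?_, hr⟩, rfl⟩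
    · simp only [Finset.coe_erase]; exact fun h => haS h.1
    · simp only [Finset.coe_erase]; exact fun h => hbS h.1
  have hSs : ((S.erase s : Finset V) : Set V) = (S : Set V) \ {s} := by
    simp [Finset.coe_erase]
  rw [hSs] at hr
  obtain ⟨ℓ, p, hp0, hpl, hpe⟩ := rtg_walk' hr
  have hhit : ∃ i, i ≤ ℓ ∧ p i = s := by
    by_contra hh
    push_neg at hh
    apply hsep
    have hall : ∀ t, t ≤ ℓ → ReflTransGen (Hrel G (S : Set V)) a (p t) := by
      intro t
      induction t with
      | zero => intro _; rw [← hp0]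
      | succ t ih =>
        intro ht
        obtain ⟨hadj, h1, h2⟩ := hpe t (by omega)
        have h1' : p t ∉ (S : Set V) := fun hmem => h1 ⟨hmem, by
          simpa using hh t (by omega)⟩
        have h2' : p (t+1) ∉ (S : Set V) := fun hmem => h2 ⟨hmem, by
          simpa using hh (t+1) (by omega)⟩
        exact (ih (by omega)).tail ⟨hadj, h1', h2'⟩
    have := hall ℓ le_rfl
    rwa [hpl] at this
  constructor
  · exact reach_nbr haS (fun h => haS (h ▸ hs)) hp0 hpe hhit
  · set p' : ℕ → V := fun t => p (ℓ - t) with hp'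
    have hp'0 : p' 0 = b := by simp only [hp', Nat.sub_zero]; exact hpl
    have hp'e : ∀ i < ℓ, Hrel G ((S : Set V) \ {s}) (p' i) (p' (i+1)) := by
      intro i hi
      have h6 := hpe (ℓ - i - 1) (by omega)
      rw [show ℓ - i - 1 + 1 = ℓ - i by omega] at h6
      have h7 := hrel_symm _ _ h6
      show Hrel G _ (p (ℓ - i)) (p (ℓ - (i+1)))
      rw [show ℓ - (i+1) = ℓ - i - 1 by omega]
      exact h7
    have hhit' : ∃ i, i ≤ ℓ ∧ p' i = s := by
      obtain ⟨i, hi, his⟩ := hhit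
      refine ⟨ℓ - i, by omega, ?_⟩
      show p (ℓ - (ℓ - i)) = s
      rw [show ℓ - (ℓ - i) = i by omega]
      exact his
    exact reach_nbr hbS (fun h => hbS (h ▸ hs)) hp'0 hp'e hhit'


lemma sep_clique [Fintype V] {G : SimpleGraph V} (hG : IsChordal G) {a b : V} {S : Set V}
    (haS : a ∉ S) (hbS : b ∉ S) (hsep : ¬ ReflTransGen (Hrel G S) a b)
    (hnbr : ∀ s ∈ S, (∃ z, G.Adj s z ∧ ReflTransGen (Hrel G S) a z) ∧
      (∃ z, G.Adj s z ∧ ReflTransGen (Hrel G S) b z)) :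
    ∀ x ∈ S, ∀ y ∈ S, x ≠ y → G.Adj x y := by
  intro x hx y hy hxy
  by_contra hnadjxy
  set A : Set V := {z | ReflTransGen (Hrel G S) a z} with hA
  set B : Set V := {z | ReflTransGen (Hrel G S) b z} with hB
  obtain ⟨⟨px, hpx1, hpx2⟩, ⟨qx, hqx1, hqx2⟩⟩ := hnbr x hx
  obtain ⟨⟨py, hpy1, hpy2⟩, ⟨qy, hqy1, hqy2⟩⟩ := hnbr y hy
  have hAS : ∀ z, z ∈ A → z ∉ S := fun z hz => rtg_not_mem haS hz
  have hBS : ∀ z, z ∈ B → z ∉ S := fun z hz => rtg_not_mem hbS hz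
  have hABdisj : ∀ z, z ∈ A → z ∈ B → False := by
    intro z hz1 hz2
    exact hsep (ReflTransGen.trans hz1 (rtg_symm (hrel_symm G S) hz2))
  have hnoedge : ∀ zA, zA ∈ A → ∀ zB, zB ∈ B → ¬ G.Adj zA zB := by
    intro zA h1 zB h2 hadj
    exact hABdisj zB (h1.tail ⟨hadj, hAS _ h1, hBS _ h2⟩) h2
  -- the A-side path
  set rA : V → V → Prop := fun u v => G.Adj u v ∧ (u = x ∨ u = y ∨ u ∈ A) ∧ (v = x ∨ v = y ∨ v ∈ A)
    with hrA
  have hmonoA : ∀ z w, z ∈ A → ReflTransGen (Hrel G S) z w → ReflTransGen rA z w ∧ w ∈ A := by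
    intro z w hz hzw
    induction hzw with
    | refl => exact ⟨.refl, hz⟩
    | tail hst hstep ih =>
      obtain ⟨ih1, ih2⟩ := ih
      have hw : _ ∈ A := ih2.tail hstep
      exact ⟨ih1.tail ⟨hstep.1, Or.inr (Or.inr ih2), Or.inr (Or.inr hw)⟩, hw⟩
  have hrtgA : ReflTransGen rA x y := by
    have hmid : ReflTransGen (Hrel G S) px py :=
      ReflTransGen.trans (rtg_symm (hrel_symm G S) hpx2) hpy2
    have hmid' := (hmonoA px py hpx2 hmid).1
    have hstep1 : rA x px := ⟨hpx1, Or.inl rfl, Or.inr (Or.inr hpx2)⟩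
    have hstep2 : rA py y := ⟨hpy1.symm, Or.inr (Or.inr hpy2), Or.inr (Or.inl rfl)⟩
    exact ReflTransGen.head hstep1 (hmid'.tail hstep2)
  have hnrA : ¬ rA x y := fun h => hnadjxy h.1
  obtain ⟨l1, p, hl1, hp0, hpl, hpe, hpinj, hpchord⟩ := exists_min_walk hrtgA hxy hnrA
  have hmemA : ∀ t, 0 < t → t < l1 → p t ∈ A := by
    intro t h0 hl
    have h4 := (hpe (t-1) (by omega)).2.2
    rw [show t-1+1 = t by omega] at h4
    rcases h4 with h4 | h4 | h4
    · exfalso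
      have := hpinj t 0 (by omega) (by omega) (by rw [hp0, h4])
      omega
    · exfalso
      have := hpinj t l1 (by omega) le_rfl (by rw [hpl, h4])
      omega
    · exact h4
  have hpeG : ∀ i < l1, G.Adj (p i) (p (i+1)) := fun i hi => (hpe i hi).1
  have hpindG : ∀ i j, i + 1 < j → j ≤ l1 → ¬ G.Adj (p i) (p j) := by
    intro i j hij hj hadj
    apply hpchord i j hij hj
    refine ⟨hadj, ?_, ?_⟩
    · by_cases h0 : i = 0
      · rw [h0, hp0]; exact Or.inl rfl
      · exact Or.inr (Or.inr (hmemA i (by omega) (by omega)))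
    · rcases Nat.eq_or_lt_of_le hj with he | hlt
      · rw [he, hpl]; exact Or.inr (Or.inl rfl)
      · exact Or.inr (Or.inr (hmemA j (by omega) hlt))
  -- the B-side path (from y to x)
  set rB : V → V → Prop := fun u v => G.Adj u v ∧ (u = x ∨ u = y ∨ u ∈ B) ∧ (v = x ∨ v = y ∨ v ∈ B)
    with hrB
  have hmonoB : ∀ z w, z ∈ B → ReflTransGen (Hrel G S) z w → ReflTransGen rB z w ∧ w ∈ B := by
    intro z w hz hzw
    induction hzw with
    | refl => exact ⟨.refl, hz⟩
    | tail hst hstep ih =>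
      obtain ⟨ih1, ih2⟩ := ih
      have hw : _ ∈ B := ih2.tail hstep
      exact ⟨ih1.tail ⟨hstep.1, Or.inr (Or.inr ih2), Or.inr (Or.inr hw)⟩, hw⟩
  have hrtgB : ReflTransGen rB y x := by
    have hmid : ReflTransGen (Hrel G S) qy qx :=
      ReflTransGen.trans (rtg_symm (hrel_symm G S) hqy2) hqx2
    have hmid' := (hmonoB qy qx hqy2 hmid).1
    have hstep1 : rB y qy := ⟨hqy1, Or.inr (Or.inl rfl), Or.inr (Or.inr hqy2)⟩
    have hstep2 : rB qx x := ⟨hqx1.symm, Or.inr (Or.inr hqx2), Or.inl rfl⟩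
    exact ReflTransGen.head hstep1 (hmid'.tail hstep2)
  have hnrB : ¬ rB y x := fun h => hnadjxy h.1.symm
  obtain ⟨l2, q, hl2, hq0, hql, hqe, hqinj, hqchord⟩ := exists_min_walk hrtgB (Ne.symm hxy) hnrB
  have hmemB : ∀ t, 0 < t → t < l2 → q t ∈ B := by
    intro t h0 hl
    have h4 := (hqe (t-1) (by omega)).2.2
    rw [show t-1+1 = t by omega] at h4
    rcases h4 with h4 | h4 | h4
    · exfalso
      have := hqinj t l2 (by omega) le_rfl (by rw [hql, h4])
      omega
    · exfalso
      have := hqinj t 0 (by omega) (by omega) (by rw [hq0, h4])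
      omega
    · exact h4
  have hqeG : ∀ i < l2, G.Adj (q i) (q (i+1)) := fun i hi => (hqe i hi).1
  have hqindG : ∀ i j, i + 1 < j → j ≤ l2 → ¬ G.Adj (q i) (q j) := by
    intro i j hij hj hadj
    apply hqchord i j hij hj
    refine ⟨hadj, ?_, ?_⟩
    · by_cases h0 : i = 0
      · rw [h0, hq0]; exact Or.inr (Or.inl rfl)
      · exact Or.inr (Or.inr (hmemB i (by omega) (by omega)))
    · rcases Nat.eq_or_lt_of_le hj with he | hlt
      · rw [he, hql]; exact Or.inl rfl
      · exact Or.inr (Or.inr (hmemB j (by omega) hlt))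
  have hcross : ∀ i j, 0 < i → i < l1 → 0 < j → j < l2 →
      ¬ G.Adj (p i) (q j) ∧ p i ≠ q j := by
    intro i j hi1 hi2 hj1 hj2
    have hiA := hmemA i hi1 hi2
    have hjB := hmemB j hj1 hj2
    exact ⟨hnoedge _ hiA _ hjB, fun he => hABdisj _ hiA (he ▸ hjB)⟩
  exact glue hG hxy hnadjxy hl1 hl2 hp0 hpl hq0 hql hpinj hqinj hpeG hqeG hpindG hqindG hcross


def IsSimp (G : SimpleGraph V) (v : V) : Prop :=
  ∀ x y, G.Adj v x → G.Adj v y → x ≠ y → G.Adj x y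

lemma chordal_comap {W : Type u} {G : SimpleGraph V} (hG : IsChordal G) {g : W → V}
    (hg : Function.Injective g) : IsChordal (G.comap g) := by
  intro n hn f hf hiff
  exact hG n hn (g ∘ f) (hg.comp hf) (fun i j => hiff i j)

set_option maxHeartbeats 1000000 in
lemma side_simp {n : ℕ} [Fintype V] {G : SimpleGraph V} (hG : IsChordal G) {S C : Set V} {c z : V}
    (hcC : c ∈ C) (hzC : z ∉ C) (hzS : z ∉ S)
    (hclosure : ∀ u, u ∈ C → ∀ w, G.Adj u w → w ∈ C ∪ S)
    (hSclique : ∀ x ∈ S, ∀ y ∈ S, x ≠ y → G.Adj x y)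
    (ih : ∀ (W : Type u) [Fintype W] (G' : SimpleGraph W), Fintype.card W ≤ n → IsChordal G' →
      (∀ x y : W, x ≠ y → G'.Adj x y) ∨
      ∃ u w : W, u ≠ w ∧ ¬ G'.Adj u w ∧ IsSimp G' u ∧ IsSimp G' w)
    (hn : Fintype.card V ≤ n + 1) :
    ∃ u, u ∈ C ∧ IsSimp G u := by
  classical
  set T : Set V := C ∪ S with hT
  have hzT : z ∉ T := by
    intro h
    rcases h with h | h
    exacts [hzC h, hzS h]
  have hcard : Fintype.card T < Fintype.card V :=
    Fintype.card_lt_of_injective_of_notMem Subtype.val Subtype.coe_injective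
      (by simpa [Subtype.range_coe] using hzT)
  set G' : SimpleGraph T := G.comap (Subtype.val) with hG'
  have hG'c : IsChordal G' := chordal_comap hG Subtype.coe_injective
  have htrans : ∀ (u : T), u.val ∈ C → IsSimp G' u → IsSimp G u.val := by
    intro u huC husimp x y hx hy hxy
    have hxT : x ∈ T := hclosure _ huC x hx
    have hyT : y ∈ T := hclosure _ huC y hy
    exact husimp ⟨x, hxT⟩ ⟨y, hyT⟩ hx hy (fun h => hxy (congrArg Subtype.val h))
  rcases ih T G' (by omega) hG'c with hcomp | ⟨u, w, huw, hnadj, hu, hw⟩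
  · refine ⟨c, hcC, ?_⟩
    intro x y hx hy hxy
    have hxT : x ∈ T := hclosure _ hcC x hx
    have hyT : y ∈ T := hclosure _ hcC y hy
    exact hcomp ⟨x, hxT⟩ ⟨y, hyT⟩ (fun h => hxy (congrArg Subtype.val h))
  · have hvalne : u.val ≠ w.val := fun h => huw (Subtype.ext h)
    have hor : u.val ∈ C ∨ w.val ∈ C := by
      by_contra hcon
      push_neg at hcon
      have huS : u.val ∈ S := ((Set.mem_union _ _ _).mp u.2).resolve_left hcon.1
      have hwS : w.val ∈ S := ((Set.mem_union _ _ _).mp w.2).resolve_left hcon.2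
      exact hnadj (hSclique _ huS _ hwS hvalne)
    rcases hor with h | h
    · exact ⟨u.val, h, htrans u h hu⟩
    · exact ⟨w.val, h, htrans w h hw⟩

lemma dirac (n : ℕ) : ∀ (V : Type u) [Fintype V] (G : SimpleGraph V),
    Fintype.card V ≤ n → IsChordal G →
    (∀ x y : V, x ≠ y → G.Adj x y) ∨
    ∃ u w : V, u ≠ w ∧ ¬ G.Adj u w ∧ IsSimp G u ∧ IsSimp G w := by
  induction n with
  | zero =>
    intro V _ G hcard _
    left
    have : IsEmpty V := Fintype.card_eq_zero_iff.mp (by omega)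
    exact fun x => isEmptyElim x
  | succ n ih =>
    intro V _ G hcard hG
    by_cases hc : ∀ x y : V, x ≠ y → G.Adj x y
    · exact Or.inl hc
    right
    push_neg at hc
    obtain ⟨a, b, hab, hnadj⟩ := hc
    obtain ⟨S, haS, hbS, hsep, hnbr⟩ := exists_min_separator hab hnadj
    have hclique := sep_clique hG haS hbS hsep hnbr
    set A : Set V := {z | ReflTransGen (Hrel G ↑S) a z} with hA
    set B : Set V := {z | ReflTransGen (Hrel G ↑S) b z} with hB
    have haA : a ∈ A := ReflTransGen.refl
    have hbB : b ∈ B := ReflTransGen.refl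
    have hABdisj : ∀ z, z ∈ A → z ∈ B → False := fun z hz1 hz2 =>
      hsep (ReflTransGen.trans hz1 (rtg_symm (hrel_symm G ↑S) hz2))
    have hAS : ∀ z, z ∈ A → z ∉ (S : Set V) := fun z hz => rtg_not_mem haS hz
    have hBS : ∀ z, z ∈ B → z ∉ (S : Set V) := fun z hz => rtg_not_mem hbS hz
    have hclosA : ∀ u, u ∈ A → ∀ w, G.Adj u w → w ∈ A ∪ ↑S := by
      intro u hu w hw
      by_cases hwS : w ∈ (S : Set V)
      · exact Or.inr hwS
      · exact Or.inl (hu.tail ⟨hw, hAS _ hu, hwS⟩)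
    have hclosB : ∀ u, u ∈ B → ∀ w, G.Adj u w → w ∈ B ∪ ↑S := by
      intro u hu w hw
      by_cases hwS : w ∈ (S : Set V)
      · exact Or.inr hwS
      · exact Or.inl (hu.tail ⟨hw, hBS _ hu, hwS⟩)
    obtain ⟨uA, huA, hsA⟩ :=
      side_simp hG haA (fun h => hABdisj b h hbB) hbS hclosA hclique ih hcard
    obtain ⟨uB, huB, hsB⟩ :=
      side_simp hG hbB (fun h => hABdisj a haA h) haS hclosB hclique ih hcard
    refine ⟨uA, uB, ?_, ?_, hsA, hsB⟩
    · exact fun h => hABdisj uA huA (h ▸ huB)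
    · intro hadj
      exact hABdisj uB (huA.tail ⟨hadj, hAS _ huA, hBS _ huB⟩) huB

lemma exists_simplicial [Fintype V] [Nonempty V] {G : SimpleGraph V} (hG : IsChordal G) :
    ∃ v, IsSimp G v := by
  rcases dirac (Fintype.card V) V G le_rfl hG with hcomp | ⟨u, _, _, _, hu, _⟩
  · exact ⟨Classical.arbitrary V, fun x y _ _ hxy => hcomp x y hxy⟩
  · exact ⟨u, hu⟩


lemma mod_shift_ne {m d n : ℕ} (hn : 4 ≤ n) (hm : m < n) (hd : 1 ≤ d) (hd2 : d ≤ 3) :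
    (m + d) % n ≠ m := by
  intro h
  rcases Nat.lt_or_ge (m + d) n with h1 | h1
  · rw [Nat.mod_eq_of_lt h1] at h; omega
  · rw [Nat.mod_eq_sub_mod h1, Nat.mod_eq_of_lt (by omega)] at h
    omega

lemma peo_exists : ∀ (n : ℕ) (V : Type u) [Fintype V] (G : SimpleGraph V),
    Fintype.card V = n → IsChordal G → ∃ ν : V ≃ Fin n, IsPEO G ν := by
  intro n
  induction n with
  | zero =>
    intro V _ G hcard _
    have : IsEmpty V := Fintype.card_eq_zero_iff.mp hcard
    exact ⟨Equiv.equivOfIsEmpty V (Fin 0), fun u => isEmptyElim u⟩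
  | succ n ih =>
    intro V _ G hcard hG
    classical
    have hne : Nonempty V := Fintype.card_pos_iff.mp (by omega)
    obtain ⟨v, hv⟩ := exists_simplicial hG
    have hcard' : Fintype.card {x : V // x ≠ v} = n := by
      have h2 : Fintype.card {x : V // ¬ x = v}
          = Fintype.card V - Fintype.card {x : V // x = v} :=
        Fintype.card_subtype_compl _
      have h3 : Fintype.card {x : V // x ≠ v} = Fintype.card {x : V // ¬ x = v} :=
        Fintype.card_congr (Equiv.refl _)
      rw [h3, h2, Fintype.card_subtype_eq, hcard]
      omega
    obtain ⟨ν', hν'⟩ := ih {x : V // x ≠ v} (G.comap Subtype.val) hcard'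
      (chordal_comap hG Subtype.coe_injective)
    refine ⟨⟨fun x => if h : x = v then Fin.last n else (ν' ⟨x, h⟩).castSucc,
      fun i => if h : i = Fin.last n then v else (ν'.symm (i.castPred h)).val, ?_, ?_⟩, ?_⟩
    · intro x
      by_cases h : x = v
      · subst h
        simp
      · simp only [dif_neg h]
        rw [dif_neg (Fin.ne_last_of_lt (Fin.castSucc_lt_last _))]
        rw [Fin.castPred_castSucc, Equiv.symm_apply_apply]
    · intro i
      by_cases h : i = Fin.last n
      · subst h
        simp
      · simp only [dif_neg h]
        rw [dif_neg (ν'.symm (i.castPred h)).2]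
        rw [Subtype.coe_eta, Equiv.apply_symm_apply, Fin.castSucc_castPred]
    · intro u z w hne' hu hz hadj1 hadj2
      simp only [Equiv.coe_fn_mk] at hu hz
      by_cases hwv : w = v
      · subst hwv
        exact hv u z hadj1.symm hadj2.symm hne'
      · have huv : u ≠ v := by
          intro h
          rw [dif_pos h] at hu
          have h5 := lt_of_lt_of_le hu (Fin.le_last _)
          exact absurd h5 (lt_irrefl _)
        have hzv : z ≠ v := by
          intro h
          rw [dif_pos h] at hz
          have h5 := lt_of_lt_of_le hz (Fin.le_last _)
          exact absurd h5 (lt_irrefl _)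
        rw [dif_neg huv, dif_neg hwv, Fin.castSucc_lt_castSucc_iff] at hu
        rw [dif_neg hzv, dif_neg hwv, Fin.castSucc_lt_castSucc_iff] at hz
        exact hν' ⟨u, huv⟩ ⟨z, hzv⟩ ⟨w, hwv⟩
          (fun h => hne' (congrArg Subtype.val h)) hu hz hadj1 hadj2

lemma peo_to_chordal [Fintype V] {G : SimpleGraph V} {m : ℕ} {ν : V ≃ Fin m}
    (hν : IsPEO G ν) : IsChordal G := by
  intro n hn f hinj hiff
  obtain ⟨k, -, hk⟩ := Finset.exists_max_image (Finset.univ : Finset (Fin n))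
    (fun i => ν (f i)) ⟨⟨0, by omega⟩, Finset.mem_univ _⟩
  set i1 : Fin n := ⟨(k.val + 1) % n, Nat.mod_lt _ (by omega)⟩ with hi1
  set i2 : Fin n := ⟨(k.val + (n - 1)) % n, Nat.mod_lt _ (by omega)⟩ with hi2
  have e1 : i1.val = (k.val + 1) % n := rfl
  have e2 : (i2.val + 1) % n = k.val := by
    show ((k.val + (n - 1)) % n + 1) % n = k.val
    rw [Nat.mod_add_mod, show k.val + (n - 1) + 1 = k.val + n by omega,
      Nat.add_mod_right, Nat.mod_eq_of_lt k.isLt]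
  have hne1 : i1 ≠ k := by
    intro h
    have := congrArg Fin.val h
    rw [e1] at this
    exact mod_shift_ne hn k.isLt (by omega) (by omega) this
  have hne2 : i2 ≠ k := by
    intro h
    have h6 : (k.val + 1) % n = k.val := by
      conv_lhs => rw [← congrArg Fin.val h]
      exact e2
    exact mod_shift_ne hn k.isLt (by omega) (by omega) h6
  have hne12 : i2 ≠ i1 := by
    intro h
    have h6 : (k.val + 2) % n = k.val := by
      have h7 := e2
      rw [h, e1, Nat.mod_add_mod] at h7
      rw [show k.val + 2 = k.val + 1 + 1 by omega]
      exact h7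
    exact mod_shift_ne hn k.isLt (by omega) (by omega) h6
  have hadj1 : G.Adj (f k) (f i1) := (hiff k i1).mpr (Or.inl e1)
  have hadj2 : G.Adj (f i2) (f k) := (hiff i2 k).mpr (Or.inl e2.symm)
  have hlt2 : ν (f i2) < ν (f k) := by
    refine lt_of_le_of_ne (hk i2 (Finset.mem_univ _)) ?_
    exact fun h => hne2 (hinj (ν.injective h))
  have hlt1 : ν (f i1) < ν (f k) := by
    refine lt_of_le_of_ne (hk i1 (Finset.mem_univ _)) ?_
    exact fun h => hne1 (hinj (ν.injective h))
  have hadj12 : G.Adj (f i2) (f i1) :=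
    hν (f i2) (f i1) (f k) (fun h => hne12 (hinj h)) hlt2 hlt1 hadj2 hadj1.symm
  rcases (hiff i2 i1).mp hadj12 with h | h
  · have h6 : i1.val = k.val := by rw [h, e2]
    rw [e1] at h6
    exact mod_shift_ne hn k.isLt (by omega) (by omega) h6
  · have h6 : (k.val + 3) % n = k.val := by
      have h7 := e2
      rw [h, e1, Nat.mod_add_mod] at h7
      rw [show ((k.val : ℕ) + 1) % n + 1 + 1 = (k.val + 1) % n + 2 by omega,
        Nat.mod_add_mod] at h7
      rw [show k.val + 3 = k.val + 1 + 2 by omega]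
      exact h7
    exact mod_shift_ne hn k.isLt (by omega) (by omega) h6

end ChordalAux

theorem statement_0 {V : Type*} [Fintype V] (G : SimpleGraph V) :
    IsChordal G ↔ ∃ ν : V ≃ Fin (Fintype.card V), IsPEO G ν := by
  constructor
  · intro hG
    exact ChordalAux.peo_exists (Fintype.card V) V G rfl hG
  · rintro ⟨ν, hν⟩
    exact ChordalAux.peo_to_chordal hν
end

section
/- Let G be a chordal graph and V' a clique of G with V' a proper subset of V. Then there exists a vertex v ∈ V \ V' such that the closed neighborhood N_G[v] is a clique of G. -/
open SimpleGraph

section ChordalAux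
universe u
variable {V : Type u} {G : SimpleGraph V}

/-- Adjacency avoiding a finite set `S`. -/
def RAdj (G : SimpleGraph V) (S : Finset V) (u v : V) : Prop := G.Adj u v ∧ u ∉ S ∧ v ∉ S

/-- Reachability avoiding `S`. -/
def Reach (G : SimpleGraph V) (S : Finset V) (u v : V) : Prop :=
  Relation.ReflTransGen (RAdj G S) u v

/-- `S` separates `a` from `b`. -/
def GSep (G : SimpleGraph V) (S : Finset V) (a b : V) : Prop :=
  a ∉ S ∧ b ∉ S ∧ ¬ Reach G S a b

/-- An indexed path from `x` to `y` with interior inside `A`. -/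
def PathProp (G : SimpleGraph V) (A : Set V) (x y : V) (m : ℕ) (p : ℕ → V) : Prop :=
  p 0 = x ∧ p m = y ∧ (∀ i, i < m → G.Adj (p i) (p (i+1))) ∧
    (∀ i, 0 < i → i < m → p i ∈ A)


lemma Reach.symm' {S : Finset V} {u v : V} (h : Reach G S u v) : Reach G S v u := by
  induction h with
  | refl => exact Relation.ReflTransGen.refl
  | tail _ hst ih =>
    exact Relation.ReflTransGen.trans (Relation.ReflTransGen.single
      ⟨hst.1.symm, hst.2.2, hst.2.1⟩) ih


lemma reach_not_mem {S : Finset V} {a t : V} (ha : a ∉ S) (h : Reach G S a t) : t ∉ S := by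
  induction h with
  | refl => exact ha
  | tail _ hst _ => exact hst.2.2


lemma exists_chain {R : V → V → Prop} {u w : V} (h : Relation.ReflTransGen R u w) :
    ∃ (m : ℕ) (p : ℕ → V), p 0 = u ∧ p m = w ∧ ∀ i, i < m → R (p i) (p (i+1)) := by
  induction h with
  | refl => exact ⟨0, fun _ => u, rfl, rfl, fun i hi => absurd hi (Nat.not_lt_zero i)⟩
  | @tail s t hst hR ih =>
    obtain ⟨m, p, hp0, hpm, hc⟩ := ih
    refine ⟨m + 1, fun i => if i ≤ m then p i else t, by simpa using hp0, by simp, ?_⟩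
    intro i hi
    rcases Nat.lt_or_ge i m with h1 | h1
    · simpa [Nat.le_of_lt h1, Nat.succ_le_of_lt h1] using hc i h1
    · have : i = m := by omega
      subst this
      simpa [hpm] using hR


lemma chain_reach {R : V → V → Prop} {m : ℕ} {p : ℕ → V}
    (hc : ∀ i, i < m → R (p i) (p (i+1))) :
    ∀ i, i ≤ m → Relation.ReflTransGen R (p 0) (p i) := by
  intro i
  induction i with
  | zero => exact fun _ => Relation.ReflTransGen.refl
  | succ k ih =>
    intro hk
    exact Relation.ReflTransGen.tail (ih (by omega)) (hc k (by omega))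


lemma splice {A : Set V} {x y : V} {m : ℕ} {p : ℕ → V}
    (hp : PathProp G A x y m p) (a s : ℕ) (hs : 1 ≤ s) (ham : a + 1 + s ≤ m)
    (hadj : G.Adj (p a) (p (a + 1 + s))) :
    PathProp G A x y (m - s) (fun i => if i ≤ a then p i else p (i + s)) := by
  obtain ⟨h0, hm, hc, hA⟩ := hp
  refine ⟨by simpa using h0, ?_, ?_, ?_⟩
  · have h1 : ¬ (m - s ≤ a) := by omega
    have h2 : m - s + s = m := by omega
    simp [h1, h2, hm]
  · intro i hi
    rcases lt_trichotomy i a with h1 | h1 | h1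
    · simpa [Nat.le_of_lt h1, Nat.succ_le_of_lt h1] using hc i (by omega)
    · subst h1
      simpa [show ¬ (i + 1 ≤ i) by omega] using hadj
    · have e1 : ¬ (i ≤ a) := by omega
      have e2 : ¬ (i + 1 ≤ a) := by omega
      simpa [e1, e2, show i + 1 + s = i + s + 1 by ring] using hc (i + s) (by omega)
  · intro i hi him
    rcases le_or_gt i a with h1 | h1
    · simpa [h1] using hA i hi (by omega)
    · have e1 : ¬ (i ≤ a) := by omega
      simpa [e1] using hA (i + s) (by omega) (by omega)


lemma exists_min_path {A : Set V} {x y : V} (hxy : x ≠ y) (hnadj : ¬ G.Adj x y)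
    (hxA : x ∉ A) (hyA : y ∉ A) (h : ∃ m p, PathProp G A x y m p) :
    ∃ m p, PathProp G A x y m p ∧ 2 ≤ m ∧
      (∀ a b, a < b → b ≤ m → b ≠ a + 1 → ¬ G.Adj (p a) (p b)) ∧
      (∀ a b, a < b → b ≤ m → p a ≠ p b) := by
  classical
  have hex : ∃ m, ∃ p, PathProp G A x y m p := h
  obtain ⟨m, hm, hmin⟩ : ∃ m, (∃ p, PathProp G A x y m p) ∧
      ∀ k, k < m → ¬ ∃ p, PathProp G A x y k p :=
    ⟨Nat.find hex, Nat.find_spec hex, fun k hk => Nat.find_min hex hk⟩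
  obtain ⟨p, hp⟩ := hm
  have hm2 : 2 ≤ m := by
    rcases Nat.lt_or_ge m 2 with h2 | h2
    · exfalso
      interval_cases m
      · exact hxy (hp.1 ▸ hp.2.1)
      · exact hnadj (by rw [← hp.1, ← hp.2.1]; exact hp.2.2.1 0 (by omega))
    · exact h2
  refine ⟨m, p, hp, hm2, ?_, ?_⟩
  · intro a b hab hbm hne hadj
    have hs : 1 ≤ b - a - 1 := by
      rcases Nat.lt_or_ge (a+1) b with h1 | h1
      · omega
      · omega
    have := splice hp a (b - a - 1) hs (by omega)
      (by rw [show a + 1 + (b - a - 1) = b by omega]; exact hadj)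
    exact hmin (m - (b - a - 1)) (by omega) ⟨_, this⟩
  · intro a b hab hbm heq
    -- rule out endpoint coincidences
    by_cases ha0 : a = 0
    · subst ha0
      rcases Nat.eq_or_lt_of_le hbm with hb | hb
      · exact hxy (by rw [← hp.1, heq, hb, hp.2.1])
      · exact hxA (by rw [← hp.1, heq]; exact hp.2.2.2 b hab hb)
    · rcases Nat.eq_or_lt_of_le hbm with hb | hb
      · exact hyA (by rw [← hp.2.1, ← hb, ← heq]; exact hp.2.2.2 a (by omega) (by omega))
      · have hadj : G.Adj (p a) (p (a + 1 + (b - a))) := by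
          rw [show a + 1 + (b - a) = b + 1 by omega, heq]
          exact hp.2.2.1 b hb
        have := splice hp a (b - a) (by omega) (by omega) hadj
        exact hmin (m - (b - a)) (by omega) ⟨_, this⟩


lemma exists_path_through {S : Finset V} {a x y u w : V}
    (ha : a ∉ S) (hu : G.Adj x u) (hw : G.Adj y w)
    (hru : Reach G S a u) (hrw : Reach G S a w) :
    ∃ m p, PathProp G {t | Reach G S a t} x y m p := by
  have huw : Reach G S u w := Relation.ReflTransGen.trans hru.symm' hrw
  obtain ⟨n, q, hq0, hqn, hc⟩ := exists_chain huw
  refine ⟨n + 2, fun i => if i = 0 then x else if i ≤ n + 1 then q (i - 1) else y,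
    by simp, by simp [show ¬ (n+2 = 0) by omega, show ¬ (n + 2 ≤ n + 1) by omega], ?_, ?_⟩
  · intro i hi
    rcases Nat.eq_zero_or_pos i with h0 | h0
    · subst h0
      simpa [hq0] using hu
    rcases Nat.lt_or_ge i (n + 1) with h1 | h1
    · have e0 : ¬ (i = 0) := by omega
      have e1 : ¬ (i + 1 = 0) := by omega
      have e2 : i ≤ n + 1 := by omega
      have e3 : i + 1 ≤ n + 1 := by omega
      have e4 : i + 1 - 1 = (i - 1) + 1 := by omega
      simp only [if_neg e0, if_pos e2, if_neg e1, if_pos e3, e4]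
      exact (hc (i - 1) (by omega)).1
    · have hieq : i = n + 1 := by omega
      subst hieq
      have e0 : ¬ (n + 1 = 0) := by omega
      have e1 : ¬ (n + 1 + 1 ≤ n + 1) := by omega
      simp only [if_neg e0, if_pos (le_refl (n+1)), if_neg (by omega : ¬ (n+1+1 = 0)), if_neg e1]
      simpa [hqn] using hw.symm
  · intro i hi him
    have e0 : ¬ (i = 0) := by omega
    have e2 : i ≤ n + 1 := by omega
    simp only [Set.mem_setOf_eq, if_neg e0, if_pos e2]
    exact Relation.ReflTransGen.trans hru (hq0 ▸ chain_reach hc (i-1) (by omega))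


lemma sep_no_two_nonadj (hG : IsChordal G) {S : Finset V} {a b x y : V}
    (hsep : GSep G S a b) (hxS : x ∈ S) (hyS : y ∈ S) (hxy : x ≠ y)
    (hnadj : ¬ G.Adj x y)
    (hApath : ∃ m p, PathProp G {t | Reach G S a t} x y m p)
    (hBpath : ∃ m p, PathProp G {t | Reach G S b t} x y m p) : False := by
  obtain ⟨haS, hbS, hab⟩ := hsep
  have hAS : ∀ t, Reach G S a t → t ∉ S := fun t h => reach_not_mem haS h
  have hBS : ∀ t, Reach G S b t → t ∉ S := fun t h => reach_not_mem hbS h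
  have hdisj : ∀ t, Reach G S a t → Reach G S b t → False := fun t h1 h2 =>
    hab (h1.trans h2.symm')
  have hnoedge : ∀ t s, Reach G S a t → Reach G S b s → ¬ G.Adj t s := by
    intro t s h1 h2 hadj
    exact hdisj s (h1.tail ⟨hadj, hAS t h1, hBS s h2⟩) h2
  obtain ⟨mA, pA, hpA, hmA2, hchA, hndA⟩ :=
    exists_min_path hxy hnadj (fun h => hAS x h hxS) (fun h => hAS y h hyS) hApath
  obtain ⟨mB, pB, hpB, hmB2, hchB, hndB⟩ :=
    exists_min_path hxy hnadj (fun h => hBS x h hxS) (fun h => hBS y h hyS) hBpath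
  set n := mA + mB with hn
  set c : ℕ → V := fun i => if i ≤ mA then pA i else pB (n - i) with hcdef
  have hc0 : c 0 = x := by simp [hcdef, hpA.1]
  have hcA : ∀ i, i ≤ mA → c i = pA i := fun i hi => by simp [hcdef, hi]
  have hcB : ∀ i, mA ≤ i → i ≤ n → c i = pB (n - i) := by
    intro i h1 h2
    rcases Nat.eq_or_lt_of_le h1 with h | h
    · have h3 : n - i = mB := by omega
      rw [hcA i (le_of_eq h.symm), h3, hpB.2.1, ← h, hpA.2.1]
    · simp [hcdef, show ¬ (i ≤ mA) by omega]
  have hmemA : ∀ i, 0 < i → i < mA → c i ∈ {t | Reach G S a t} := by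
    intro i h1 h2
    rw [hcA i (by omega)]
    exact hpA.2.2.2 i h1 h2
  have hmemB : ∀ i, mA < i → i < n → c i ∈ {t | Reach G S b t} := by
    intro i h1 h2
    rw [hcB i (by omega) (by omega)]
    exact hpB.2.2.2 (n - i) (by omega) (by omega)
  -- consecutive adjacency
  have hcons : ∀ i, i + 1 < n → G.Adj (c i) (c (i+1)) := by
    intro i hi
    rcases Nat.lt_or_ge i mA with h1 | h1
    · rw [hcA i (by omega), hcA (i+1) (by omega)]
      exact hpA.2.2.1 i h1
    · rw [hcB i h1 (by omega), hcB (i+1) (by omega) (by omega)]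
      have : n - i = (n - (i+1)) + 1 := by omega
      rw [this]
      exact (hpB.2.2.1 (n - (i+1)) (by omega)).symm
  have hwrap : G.Adj (c (n-1)) (c 0) := by
    rw [hc0, hcB (n-1) (by omega) (by omega), show n - (n-1) = 1 by omega, ← hpB.1]
    exact (hpB.2.2.1 0 (by omega)).symm
  -- forward: adjacency implies consecutive
  have hadjimp : ∀ i j, i < j → j < n → G.Adj (c i) (c j) →
      j = i + 1 ∨ (i = 0 ∧ j = n - 1) := by
    intro i j hij hjn hadj
    rcases Nat.lt_or_ge mA j with hj1 | hj1
    · -- j > mA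
      rcases Nat.lt_or_ge i mA with hi1 | hi1
      · rcases Nat.eq_zero_or_pos i with h0 | h0
        · subst h0
          rw [hc0, ← hpB.1, hcB j (by omega) (by omega)] at hadj
          by_cases hone : n - j = 1
          · right; exact ⟨rfl, by omega⟩
          · exact absurd hadj (hchB 0 (n-j) (by omega) (by omega) (by omega))
        · exact absurd hadj (hnoedge _ _ (hmemA i h0 hi1) (hmemB j hj1 hjn))
      · -- i ≥ mA
        rw [hcB i hi1 (by omega), hcB j (by omega) (by omega)] at hadj
        by_cases hcons' : n - i = (n - j) + 1
        · left; omega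
        · exact absurd hadj.symm (hchB (n-j) (n-i) (by omega) (by omega) (by omega))
    · -- j ≤ mA
      rw [hcA i (by omega), hcA j hj1] at hadj
      by_cases hcons' : j = i + 1
      · left; exact hcons'
      · exact absurd hadj (hchA i j hij hj1 hcons')
  -- injectivity
  have hinj : ∀ i j, i < j → j < n → c i ≠ c j := by
    intro i j hij hjn heq
    rcases Nat.lt_or_ge mA j with hj1 | hj1
    · rcases Nat.lt_or_ge i mA with hi1 | hi1
      · rcases Nat.eq_zero_or_pos i with h0 | h0
        · subst h0
          rw [hc0, ← hpB.1, hcB j (by omega) (by omega)] at heq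
          exact hndB 0 (n-j) (by omega) (by omega) heq
        · exact hdisj _ (hmemA i h0 hi1) (heq ▸ hmemB j hj1 hjn)
      · rw [hcB i hi1 (by omega), hcB j (by omega) (by omega)] at heq
        exact hndB (n-j) (n-i) (by omega) (by omega) heq.symm
    · rw [hcA i (by omega), hcA j hj1] at heq
      exact hndA i j hij hj1 heq
  -- contradiction with chordality
  have hn4 : 4 ≤ n := by omega
  apply hG n hn4 (fun i => c i.val)
  · intro i j hij
    rcases lt_trichotomy (i:ℕ) (j:ℕ) with h | h | h
    · exact absurd hij (hinj i j h j.isLt)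
    · exact Fin.ext h
    · exact absurd hij.symm (hinj j i h i.isLt)
  · intro i j
    constructor
    · intro hadj
      rcases lt_trichotomy (i:ℕ) (j:ℕ) with h | h | h
      · rcases hadjimp i j h j.isLt hadj with h1 | ⟨h1, h2⟩
        · left; rw [h1]; exact (Nat.mod_eq_of_lt (by omega : (i:ℕ)+1 < n)).symm
        · right; rw [h1, h2, show n - 1 + 1 = n by omega, Nat.mod_self]
      · have hij : i = j := Fin.ext h
        subst hij
        exact (G.irrefl hadj).elim
      · rcases hadjimp j i h i.isLt hadj.symm with h1 | ⟨h1, h2⟩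
        · right; rw [h1]; exact (Nat.mod_eq_of_lt (by omega : (j:ℕ)+1 < n)).symm
        · left; rw [h1, h2, show n - 1 + 1 = n by omega, Nat.mod_self]
    · intro hcons'
      rcases hcons' with h | h
      · rcases Nat.lt_or_ge ((i:ℕ)+1) n with h1 | h1
        · have h2 : (j:ℕ) = (i:ℕ)+1 := by rw [h, Nat.mod_eq_of_lt h1]
          show G.Adj (c i) (c j)
          rw [h2]
          exact hcons i h1
        · have hlt := i.isLt
          have hin : (i:ℕ) + 1 = n := by omega
          have hi : (i:ℕ) = n - 1 := by omega
          have hj : (j:ℕ) = 0 := by rw [h, hin, Nat.mod_self]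
          show G.Adj (c i) (c j)
          rw [hi, hj]
          exact hwrap
      · rcases Nat.lt_or_ge ((j:ℕ)+1) n with h1 | h1
        · have h2 : (i:ℕ) = (j:ℕ)+1 := by rw [h, Nat.mod_eq_of_lt h1]
          show G.Adj (c i) (c j)
          rw [h2]
          exact (hcons j h1).symm
        · have hlt := j.isLt
          have hjn : (j:ℕ) + 1 = n := by omega
          have hj : (j:ℕ) = n - 1 := by omega
          have hi : (i:ℕ) = 0 := by rw [h, hjn, Nat.mod_self]
          show G.Adj (c i) (c j)
          rw [hi, hj]
          exact hwrap.symm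

lemma gsep_symm {S : Finset V} {a b : V} (h : GSep G S a b) : GSep G S b a :=
  ⟨h.2.1, h.1, fun hr => h.2.2 hr.symm'⟩


lemma minsep_neighbor [DecidableEq V] {S : Finset V} {a b : V} (hsep : GSep G S a b)
    (hmin : ∀ S' : Finset V, GSep G S' a b → S.card ≤ S'.card) {x : V} (hx : x ∈ S) :
    ∃ u, Reach G S a u ∧ G.Adj x u := by
  by_contra hno
  push_neg at hno
  have claim : ∀ t, Reach G (S.erase x) a t → Reach G S a t := by
    intro t h
    induction h with
    | refl => exact Relation.ReflTransGen.refl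
    | @tail s t hst hR ih =>
      by_cases htx : t = x
      · subst htx
        exact absurd hR.1.symm (hno s ih)
      · refine ih.tail ⟨hR.1, reach_not_mem hsep.1 ih, fun htS => ?_⟩
        exact hR.2.2 (Finset.mem_erase.2 ⟨htx, htS⟩)
  have hsep' : GSep G (S.erase x) a b :=
    ⟨fun h => hsep.1 (Finset.mem_of_mem_erase h),
     fun h => hsep.2.1 (Finset.mem_of_mem_erase h),
     fun h => hsep.2.2 (claim b h)⟩
  have := hmin _ hsep'
  have := Finset.card_erase_lt_of_mem hx
  omega


lemma minsep_clique [DecidableEq V] (hG : IsChordal G) {S : Finset V} {a b : V}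
    (hsep : GSep G S a b)
    (hmin : ∀ S' : Finset V, GSep G S' a b → S.card ≤ S'.card) :
    G.IsClique (S : Set V) := by
  intro x hx y hy hxy
  by_contra hnadj
  obtain ⟨ux, hux, haux⟩ := minsep_neighbor hsep hmin hx
  obtain ⟨uy, huy, hauy⟩ := minsep_neighbor hsep hmin hy
  have hminb : ∀ S' : Finset V, GSep G S' b a → S.card ≤ S'.card :=
    fun S' h => hmin S' (gsep_symm h)
  obtain ⟨vx, hvx, havx⟩ := minsep_neighbor (gsep_symm hsep) hminb hx
  obtain ⟨vy, hvy, havy⟩ := minsep_neighbor (gsep_symm hsep) hminb hy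
  exact sep_no_two_nonadj hG hsep hx hy hxy hnadj
    (exists_path_through hsep.1 haux hauy hux huy)
    (exists_path_through hsep.2.1 havx havy hvx hvy)


lemma exists_sep [Fintype V] [DecidableEq V] {a b : V} (hab : a ≠ b)
    (hnadj : ¬ G.Adj a b) : GSep G (Finset.univ \ {a, b}) a b := by
  refine ⟨by simp, by simp, fun h => ?_⟩
  have claim : ∀ t, Reach G (Finset.univ \ ({a, b} : Finset V)) a t → t = a := by
    intro t h
    induction h with
    | refl => rfl
    | @tail s t hst hR ih =>
      have hmem : t ∈ ({a, b} : Finset V) := by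
        by_contra hns
        exact hR.2.2 (Finset.mem_sdiff.2 ⟨Finset.mem_univ t, hns⟩)
      have hat : G.Adj a t := ih ▸ hR.1
      rcases Finset.mem_insert.1 hmem with h1 | h1
      · exact absurd (h1 ▸ hat) G.irrefl
      · exact absurd ((Finset.mem_singleton.1 h1) ▸ hat) hnadj
  exact hab ((claim b h).symm)


lemma induce_chordal (hG : IsChordal G) (W : Set V) : IsChordal (G.induce W) := by
  intro n hn f hf hcyc
  refine hG n hn (fun i => (f i : V)) (fun i j h => hf (Subtype.ext h)) ?_
  intro i j
  rw [← hcyc i j]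
  exact Iff.rfl


lemma descend [Fintype V] (hG : IsChordal G)
    {S : Finset V} {a b : V} (hsep : GSep G S a b) (hScl : G.IsClique (S : Set V))
    {K : Set V} (hK : G.IsClique K) (hKA : ∀ t ∈ K, ¬ Reach G S a t)
    (IH : ∀ (W : Type u) [Fintype W] (H : SimpleGraph W),
      Fintype.card W < Fintype.card V → IsChordal H →
      ∀ K' : Set W, H.IsClique K' → K' ≠ Set.univ →
        ∃ v, v ∉ K' ∧ H.IsClique (insert v (H.neighborSet v))) :
    ∃ v, v ∉ K ∧ G.IsClique (insert v (G.neighborSet v)) := by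
  classical
  set A : Set V := {t | Reach G S a t} with hA
  set W : Set V := A ∪ ↑S with hW
  have haW : a ∈ W := Or.inl Relation.ReflTransGen.refl
  have hbW : b ∉ W := by
    rintro (h | h)
    · exact hsep.2.2 h
    · exact hsep.2.1 h
  have hcard : Fintype.card ↥W < Fintype.card V := by
    apply Fintype.card_lt_of_injective_of_notMem _ Subtype.val_injective (b := b)
    rwa [Subtype.range_coe]
  set K' : Set ↥W := {w : ↥W | (w : V) ∈ S} with hK'
  have hK'cl : (G.induce W).IsClique K' := by
    intro u hu w hw hne
    exact hScl hu hw (fun h => hne (Subtype.ext h))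
  have hK'ne : K' ≠ Set.univ := by
    intro h
    have : (⟨a, haW⟩ : ↥W) ∈ K' := h ▸ Set.mem_univ _
    exact hsep.1 this
  obtain ⟨v, hvK', hvcl⟩ := IH ↥W (G.induce W) hcard (induce_chordal hG W) K' hK'cl hK'ne
  have hvA : (v : V) ∈ A := Or.resolve_right v.2 (fun h => hvK' h)
  have hnb : ∀ z, G.Adj (v : V) z → z ∈ W := by
    intro z hz
    by_cases hzS : z ∈ S
    · exact Or.inr hzS
    · exact Or.inl (Relation.ReflTransGen.tail hvA ⟨hz, reach_not_mem hsep.1 hvA, hzS⟩)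
  refine ⟨(v : V), fun h => hKA _ h hvA, ?_⟩
  intro u hu w hw hne
  have huW : u ∈ W := by
    rcases Set.mem_insert_iff.1 hu with h | h
    · exact h ▸ v.2
    · exact hnb u h
  have hwW : w ∈ W := by
    rcases Set.mem_insert_iff.1 hw with h | h
    · exact h ▸ v.2
    · exact hnb w h
  have hu' : (⟨u, huW⟩ : ↥W) ∈ insert v ((G.induce W).neighborSet v) := by
    rcases Set.mem_insert_iff.1 hu with h | h
    · exact Or.inl (Subtype.ext h)
    · exact Or.inr h
  have hw' : (⟨w, hwW⟩ : ↥W) ∈ insert v ((G.induce W).neighborSet v) := by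
    rcases Set.mem_insert_iff.1 hw with h | h
    · exact Or.inl (Subtype.ext h)
    · exact Or.inr h
  exact hvcl hu' hw' (fun h => hne (congrArg Subtype.val h))


lemma aux_induction : ∀ (n : ℕ) (V : Type u) [Fintype V] (G : SimpleGraph V),
    Fintype.card V ≤ n → IsChordal G → ∀ K : Set V, G.IsClique K → K ≠ Set.univ →
    ∃ v, v ∉ K ∧ G.IsClique (insert v (G.neighborSet v)) := by
  intro n
  induction n with
  | zero =>
    intro V _ G hcard _ K _ hKuniv
    exfalso
    haveI : IsEmpty V := Fintype.card_eq_zero_iff.1 (Nat.le_zero.1 hcard)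
    exact hKuniv (Set.eq_univ_of_forall (fun v => isEmptyElim v))
  | succ n ih =>
    intro V _ G hcard hG K hK hKuniv
    classical
    obtain ⟨z, hz⟩ : ∃ z, z ∉ K := by
      by_contra h
      push_neg at h
      exact hKuniv (Set.eq_univ_of_forall h)
    by_cases hcomp : ∀ u w : V, u ≠ w → G.Adj u w
    · exact ⟨z, hz, fun u _ w _ hne => hcomp u w hne⟩
    push_neg at hcomp
    obtain ⟨p, q, hpq, hnadj⟩ := hcomp
    have hels : ∃ k, ∃ S : Finset V, S.card = k ∧ GSep G S p q :=
      ⟨_, _, rfl, exists_sep hpq hnadj⟩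
    obtain ⟨S, hScard, hS⟩ := Nat.find_spec hels
    have hSmin : ∀ S' : Finset V, GSep G S' p q → S.card ≤ S'.card := by
      intro S' hS'
      rw [hScard]
      exact Nat.find_le ⟨S', rfl, hS'⟩
    have hclS := minsep_clique hG hS hSmin
    have IH' : ∀ (W : Type u) [Fintype W] (H : SimpleGraph W),
        Fintype.card W < Fintype.card V → IsChordal H →
        ∀ K' : Set W, H.IsClique K' → K' ≠ Set.univ →
          ∃ v, v ∉ K' ∧ H.IsClique (insert v (H.neighborSet v)) :=
      fun W _ H hlt hH => ih W H (by omega) hH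
    by_cases hKA : ∀ t ∈ K, ¬ Reach G S p t
    · exact descend hG hS hclS hK hKA IH'
    · push_neg at hKA
      obtain ⟨t, htK, htR⟩ := hKA
      have hKB : ∀ t' ∈ K, ¬ Reach G S q t' := by
        intro t' ht' hR'
        by_cases hne : t = t'
        · exact hS.2.2 (htR.trans (hne ▸ hR'.symm'))
        · have hadj : G.Adj t t' := hK htK ht' hne
          exact hS.2.2
            ((htR.tail ⟨hadj, reach_not_mem hS.1 htR, reach_not_mem hS.2.1 hR'⟩).trans
              hR'.symm')
      exact descend hG (gsep_symm hS) hclS hK hKB IH'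

end ChordalAux

theorem statement_1 {V : Type*} [Fintype V] (G : SimpleGraph V) (hG : IsChordal G)
    (K : Set V) (hK : G.IsClique K) (hKV : K ≠ Set.univ) :
    ∃ v : V, v ∉ K ∧ G.IsClique (insert v (G.neighborSet v)) := by
  exact aux_induction (Fintype.card V) V G le_rfl hG K hK hKV
end

section
/- Let G be a signed graph, v a signed-simplicial vertex of G, and ν a signed elimination ordering on G \ v. Then the extension of ν to V mapping v to |V| is a signed elimination ordering on G. -/
open SimpleGraph

theorem statement_7 {V : Type*} {n : ℕ} (G : Bool → SimpleGraph V) (hdisj : SDisjoint G)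
    (v : V) (hv : SignedSimplicial G v)
    (ν : {w : V | w ≠ v} ≃ Fin n)
    (hν : IsSEO (fun σ => SimpleGraph.induce {w : V | w ≠ v} (G σ)) ν)
    (νb : V ≃ Fin (n + 1)) (h1 : νb v = Fin.last n)
    (h2 : ∀ w : {w : V | w ≠ v}, νb w.1 = Fin.castSucc (ν w)) :
    IsSEO G νb := by
  intro a b c hab hac hbc σ
  have ha : a ≠ v := fun h => absurd hac (by rw [h, h1]; exact not_lt.2 (νb c).le_last)
  have hb : b ≠ v := fun h => absurd hbc (by rw [h, h1]; exact not_lt.2 (νb c).le_last)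
  by_cases hc : c = v
  · subst hc
    constructor
    · intro hav hbv
      exact hv.1 σ (Set.mem_insert_iff.2 (Or.inr hav.symm))
        (Set.mem_insert_iff.2 (Or.inr hbv.symm)) hab
    · intro hab' hbv
      have := hv.2 (!σ) a b
      rw [Bool.not_not] at this
      exact this hab' hbv
  · exact hν ⟨a, ha⟩ ⟨b, hb⟩ ⟨c, hc⟩
      (fun h => hab (congrArg Subtype.val h))
      (by rw [← Fin.castSucc_lt_castSucc_iff, ← h2, ← h2]; exact hac)
      (by rw [← Fin.castSucc_lt_castSucc_iff, ← h2, ← h2]; exact hbc) σ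
end

section
/- Let G be a signed-eliminable signed graph and v any signed-simplicial vertex of G. Then there exists a signed elimination ordering ν on G with ν(v) = |V|. -/
open SimpleGraph

def moveToLast {n : ℕ} (i₀ : Fin n) : Equiv.Perm (Fin n) where
  toFun j := if j = i₀ then ⟨n - 1, by have := i₀.isLt; omega⟩
    else if j.val < i₀.val then j else ⟨j.val - 1, by have := j.isLt; omega⟩
  invFun k := if h : k.val = n - 1 then i₀
    else if k.val < i₀.val then k else ⟨k.val + 1, by have := k.isLt; omega⟩
  left_inv j := by
    have h1 := j.isLt; have h2 := i₀.isLt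
    rcases eq_or_ne j i₀ with h | h
    · subst h; simp
    · have hv : j.val ≠ i₀.val := fun hh => h (Fin.ext hh)
      simp only [if_neg h]
      split_ifs <;> simp only [Fin.ext_iff, not_true_eq_false, false_implies] at * <;> omega
  right_inv k := by
    have h1 := k.isLt; have h2 := i₀.isLt
    dsimp only
    split_ifs <;> simp only [Fin.ext_iff, not_true_eq_false, false_implies] at * <;> omega

lemma moveToLast_val_lt {n : ℕ} (i₀ j : Fin n) (h : j ≠ i₀) :
    (moveToLast i₀ j).val < n - 1 := by
  have h1 := j.isLt; have h2 := i₀.isLt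
  have hv : j.val ≠ i₀.val := fun hh => h (Fin.ext hh)
  simp only [moveToLast, Equiv.coe_fn_mk, if_neg h]
  split_ifs <;> (try simp only [Fin.val_mk]) <;> omega

lemma moveToLast_self_val {n : ℕ} (i₀ : Fin n) : (moveToLast i₀ i₀).val = n - 1 := by
  simp [moveToLast]

lemma moveToLast_lt_iff {n : ℕ} (i₀ j k : Fin n) (hj : j ≠ i₀) (hk : k ≠ i₀) :
    (moveToLast i₀ j).val < (moveToLast i₀ k).val ↔ j.val < k.val := by
  have h1 := j.isLt; have h2 := i₀.isLt; have h3 := k.isLt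
  have hvj : j.val ≠ i₀.val := fun hh => hj (Fin.ext hh)
  have hvk : k.val ≠ i₀.val := fun hh => hk (Fin.ext hh)
  simp only [moveToLast, Equiv.coe_fn_mk, if_neg hj, if_neg hk]
  split_ifs <;> (try simp only [Fin.val_mk]) <;> omega

theorem statement_8 {V : Type*} [Fintype V] (G : Bool → SimpleGraph V) (hdisj : SDisjoint G)
    (hSE : SignedEliminable G) (v : V) (hv : SignedSimplicial G v) :
    ∃ ν : V ≃ Fin (Fintype.card V), IsSEO G ν ∧ ∀ w : V, ν w ≤ ν v := by
  obtain ⟨n, ν₀, h₀⟩ := hSE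
  have hn : Fintype.card V = n := by
    rw [Fintype.card_congr ν₀, Fintype.card_fin]
  set i₀ := ν₀ v with hi₀
  refine ⟨(ν₀.trans (moveToLast i₀)).trans (finCongr hn.symm), ?_, ?_⟩
  · -- IsSEO
    have hval : ∀ x : V, (((ν₀.trans (moveToLast i₀)).trans (finCongr hn.symm)) x).val
        = (moveToLast i₀ (ν₀ x)).val := by
      intro x; simp [Equiv.trans_apply]
    have hmax : ∀ x : V, x ≠ v →
        ((ν₀.trans (moveToLast i₀)).trans (finCongr hn.symm)) x
          < ((ν₀.trans (moveToLast i₀)).trans (finCongr hn.symm)) v := by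
      intro x hx
      rw [Fin.lt_def, hval, hval, hi₀, moveToLast_self_val]
      exact moveToLast_val_lt _ _ (fun hh => hx (ν₀.injective hh))
    intro a b c hab ha hb σ
    by_cases hc : c = v
    · subst hc
      constructor
      · intro h1 h2
        exact hv.1 σ (by simp [SimpleGraph.mem_neighborSet, h1.symm])
          (by simp [SimpleGraph.mem_neighborSet, h2.symm]) hab
      · intro h1 h2
        have := hv.2 (!σ) a b (by simpa using h1) h2
        simpa using this
    · have hane : a ≠ v := by
        rintro rfl
        exact absurd (ha.trans (hmax c hc)) (lt_irrefl _)
      have hbne : b ≠ v := by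
        rintro rfl
        exact absurd (hb.trans (hmax c hc)) (lt_irrefl _)
      have ha' : ν₀ a < ν₀ c := by
        rw [Fin.lt_def, ← moveToLast_lt_iff i₀ _ _
          (fun hh => hane (ν₀.injective hh)) (fun hh => hc (ν₀.injective hh))]
        rw [Fin.lt_def, hval, hval] at ha; exact ha
      have hb' : ν₀ b < ν₀ c := by
        rw [Fin.lt_def, ← moveToLast_lt_iff i₀ _ _
          (fun hh => hbne (ν₀.injective hh)) (fun hh => hc (ν₀.injective hh))]
        rw [Fin.lt_def, hval, hval] at hb; exact hb
      exact h₀ a b c hab ha' hb' σ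
  · intro w
    rw [Fin.le_def]
    simp only [Equiv.trans_apply, finCongr_apply, Fin.coe_cast]
    rw [← hi₀, moveToLast_self_val]
    have := (moveToLast i₀ (ν₀ w)).isLt
    omega
end

section
/- For any signed-eliminable signed graph G, the multiset d^(ν) consisting of the pairs d^(ν)(i) = (d^(ν)_+(i), d^(ν)_-(i)) for 1 ≤ i ≤ |V|, where d^(ν)_σ(i) = |{v : ν(v) ≤ i and ν^{-1}(i) ~_σ v}|, does not depend on the choice of signed elimination ordering ν on G. -/
open SimpleGraph

namespace SEOProofAux

variable {V : Type*} [DecidableEq V]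

section Defs

variable (G : Bool → SimpleGraph V) [∀ σ : Bool, DecidableRel (G σ).Adj]

/-- Number of earlier `σ`-neighbours of `x` within `s`, under ranking `r`. -/
def cD (σ : Bool) (s : Finset V) (r : V → ℕ) (x : V) : ℕ :=
  (s.filter fun v => r v < r x ∧ (G σ).Adj x v).card

/-- The degree pair of `x`. -/
def Dm (s : Finset V) (r : V → ℕ) (x : V) : ℕ × ℕ :=
  (cD G true s r x, cD G false s r x)

def cLe (σ : Bool) (s : Finset V) (r : V → ℕ) (z : V) (k : ℕ) : ℕ :=
  (s.filter fun v => (G σ).Adj z v ∧ r v ≤ k).card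

def cLt (σ : Bool) (s : Finset V) (r : V → ℕ) (z : V) (k : ℕ) : ℕ :=
  (s.filter fun v => (G σ).Adj z v ∧ r v < k).card

def cTp (σ : Bool) (s : Finset V) (r : V → ℕ) (z : V) (T : Finset V) : ℕ :=
  (s.filter fun v => (G σ).Adj z v ∧ (r v < r z ∨ v ∈ T)).card

def pLe (s : Finset V) (r : V → ℕ) (z : V) (k : ℕ) : ℕ × ℕ :=
  (cLe G true s r z k, cLe G false s r z k)

def pLt (s : Finset V) (r : V → ℕ) (z : V) (k : ℕ) : ℕ × ℕ :=
  (cLt G true s r z k, cLt G false s r z k)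

def pTp (s : Finset V) (r : V → ℕ) (z : V) (T : Finset V) : ℕ × ℕ :=
  (cTp G true s r z T, cTp G false s r z T)

def pDeg (s : Finset V) (z : V) : ℕ × ℕ :=
  ((s.filter fun v => (G true).Adj z v).card, (s.filter fun v => (G false).Adj z v).card)

/-- Signed elimination ordering conditions on a finite vertex set `s`, ordered by `r`. -/
def SEOon (s : Finset V) (r : V → ℕ) : Prop :=
  ∀ u ∈ s, ∀ v ∈ s, ∀ w ∈ s, u ≠ v → r u < r w → r v < r w → ∀ σ : Bool,
    ((G σ).Adj u w → (G σ).Adj v w → (G σ).Adj u v) ∧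
    ((G σ).Adj u v → (G (!σ)).Adj v w → (G σ).Adj u w)

end Defs

variable {G : Bool → SimpleGraph V} [∀ σ : Bool, DecidableRel (G σ).Adj]

lemma adj_or {σ : Bool} {z v : V} (h : (G σ).Adj z v) :
    (G true).Adj z v ∨ (G false).Adj z v := by
  cases σ
  · exact Or.inr h
  · exact Or.inl h

lemma card_union_ite {A : Finset V} {a : V} (ha : a ∉ A) (c : Prop) [Decidable c] :
    (A ∪ if c then {a} else ∅).card = A.card + (if c then 1 else 0) := by
  split_ifs with h
  · rw [Finset.union_comm, ← Finset.insert_eq, Finset.card_insert_of_notMem ha]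
  · simp

/-- The chain lemma: along any set `T` of later neighbours of `z` that is downward
closed among later neighbours, the multiset of counts `≤`, with the count at `z`,
equals the multiset of counts `<`, with the count over everything below `z` or in `T`. -/
lemma chain (s : Finset V) (r : V → ℕ) (hr : Set.InjOn r s) (z : V) (hz : z ∈ s) :
    ∀ T : Finset V,
      (∀ y ∈ T, y ∈ s ∧ ((G true).Adj z y ∨ (G false).Adj z y) ∧ r z < r y) →
      (∀ a ∈ s, ((G true).Adj z a ∨ (G false).Adj z a) → r z < r a →
        ∀ b ∈ T, r a ≤ r b → a ∈ T) →
      T.val.map (fun y => pLe G s r z (r y)) + {pLe G s r z (r z)} =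
        T.val.map (fun y => pLt G s r z (r y)) + {pTp G s r z T} := by
  intro T
  induction T using Finset.strongInduction with
  | _ T ih =>
    intro hTs hdc
    rcases T.eq_empty_or_nonempty with rfl | hne
    · simp only [Finset.empty_val, Multiset.map_zero, zero_add]
      congr 1
      have hcomp : ∀ σ : Bool, cLe G σ s r z (r z) = cTp G σ s r z (∅ : Finset V) := by
        intro σ
        unfold cLe cTp
        apply congrArg Finset.card
        apply Finset.filter_congr
        intro v hv
        constructor
        · rintro ⟨hadj, hle⟩
          exact ⟨hadj, Or.inl (lt_of_le_of_ne hle (fun he => hadj.ne' (hr hv hz he)))⟩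
        · rintro ⟨hadj, h | h⟩
          · exact ⟨hadj, le_of_lt h⟩
          · exact absurd h (Finset.notMem_empty v)
      exact Prod.ext (hcomp true) (hcomp false)
    · obtain ⟨m, hmT, hmax⟩ := T.exists_max_image r hne
      obtain ⟨hmS, hmor, hmlt⟩ := hTs m hmT
      have hT'ss : T.erase m ⊂ T := Finset.erase_ssubset hmT
      have hTs' : ∀ y ∈ T.erase m,
          y ∈ s ∧ ((G true).Adj z y ∨ (G false).Adj z y) ∧ r z < r y :=
        fun y hy => hTs y (Finset.mem_of_mem_erase hy)
      have hdc' : ∀ a ∈ s, ((G true).Adj z a ∨ (G false).Adj z a) → r z < r a →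
          ∀ b ∈ T.erase m, r a ≤ r b → a ∈ T.erase m := by
        intro a ha hadj hlt b hb hle
        have haT : a ∈ T := hdc a ha hadj hlt b (Finset.mem_of_mem_erase hb) hle
        refine Finset.mem_erase.mpr ⟨?_, haT⟩
        rintro rfl
        have hbS := (hTs b (Finset.mem_of_mem_erase hb)).1
        exact (Finset.mem_erase.mp hb).1
          (hr hbS hmS (le_antisymm (hmax b (Finset.mem_of_mem_erase hb)) hle))
      have eq1 : pLe G s r z (r m) = pTp G s r z T := by
        have hcomp : ∀ σ : Bool, cLe G σ s r z (r m) = cTp G σ s r z T := by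
          intro σ
          unfold cLe cTp
          apply congrArg Finset.card
          apply Finset.filter_congr
          intro v hv
          constructor
          · rintro ⟨hadj, hle⟩
            refine ⟨hadj, ?_⟩
            by_cases h : r v < r z
            · exact Or.inl h
            · have hzv : r z < r v :=
                lt_of_le_of_ne (not_lt.mp h) (fun he => hadj.ne' (hr hv hz he.symm))
              exact Or.inr (hdc v hv (adj_or hadj) hzv m hmT hle)
          · rintro ⟨hadj, h | h⟩
            · exact ⟨hadj, le_of_lt (lt_trans h hmlt)⟩
            · exact ⟨hadj, hmax v h⟩
        exact Prod.ext (hcomp true) (hcomp false)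
      have eq2 : pLt G s r z (r m) = pTp G s r z (T.erase m) := by
        have hcomp : ∀ σ : Bool, cLt G σ s r z (r m) = cTp G σ s r z (T.erase m) := by
          intro σ
          unfold cLt cTp
          apply congrArg Finset.card
          apply Finset.filter_congr
          intro v hv
          constructor
          · rintro ⟨hadj, hlt'⟩
            refine ⟨hadj, ?_⟩
            by_cases h : r v < r z
            · exact Or.inl h
            · have hzv : r z < r v :=
                lt_of_le_of_ne (not_lt.mp h) (fun he => hadj.ne' (hr hv hz he.symm))
              have hvT : v ∈ T := hdc v hv (adj_or hadj) hzv m hmT (le_of_lt hlt')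
              exact Or.inr (Finset.mem_erase.mpr ⟨fun he => absurd (he ▸ hlt') (lt_irrefl _), hvT⟩)
          · rintro ⟨hadj, h | h⟩
            · exact ⟨hadj, lt_trans h hmlt⟩
            · refine ⟨hadj, lt_of_le_of_ne (hmax v (Finset.mem_of_mem_erase h)) ?_⟩
              exact fun he => (Finset.mem_erase.mp h).1 (hr hv hmS he)
        exact Prod.ext (hcomp true) (hcomp false)
      have hconsT : T.val = m ::ₘ (T.erase m).val := by
        rw [Finset.erase_val]
        exact (Multiset.cons_erase (Finset.mem_val.mpr hmT)).symm
      have hih := ih (T.erase m) hT'ss hTs' hdc'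
      rw [hconsT, Multiset.map_cons, Multiset.map_cons, Multiset.cons_add,
        Multiset.cons_add, eq1, eq2, ← Multiset.singleton_add, ← Multiset.singleton_add,
        hih]
      abel

section Key

variable (s : Finset V) (r : V → ℕ)

/-- Key lemma: removing a signed-simplicial vertex `z` from `s` replaces the degree
pair multiset by the one of `s.erase z` together with the full degree pair of `z`. -/
lemma key (hr : Set.InjOn r s) (hseo : SEOon G s r) (z : V) (hz : z ∈ s)
    (hz1 : ∀ σ : Bool, ∀ u ∈ s, ∀ v ∈ s,
      (G σ).Adj z u → (G σ).Adj z v → u ≠ v → (G σ).Adj u v)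
    (hz2 : ∀ σ : Bool, ∀ u ∈ s, ∀ w ∈ s,
      u ≠ z → (G σ).Adj u w → (G (!σ)).Adj w z → (G σ).Adj u z) :
    s.val.map (Dm G s r) = (s.erase z).val.map (Dm G (s.erase z) r) + {pDeg G s z} := by
  classical
  set LN : Finset V :=
    s.filter (fun v => ((G true).Adj z v ∨ (G false).Adj z v) ∧ r z < r v) with hLN
  have memLN : ∀ {y : V}, y ∈ LN ↔
      y ∈ s ∧ ((G true).Adj z y ∨ (G false).Adj z y) ∧ r z < r y := by
    intro y; simp [hLN]
  -- the fundamental structural fact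
  have fact1 : ∀ (σ : Bool) (y : V), y ∈ s →
      ((G true).Adj z y ∨ (G false).Adj z y) → r z < r y →
      ∀ v ∈ s, v ≠ z →
        ((r v < r y ∧ (G σ).Adj y v) ↔ ((G σ).Adj z v ∧ r v < r y)) := by
    intro σ y hy hyor hylt v hv hvz
    have hτ : ¬ (G σ).Adj z y → (G (!σ)).Adj z y := by
      intro h
      cases σ
      · exact hyor.resolve_right h
      · exact hyor.resolve_left h
    constructor
    · rintro ⟨hlt, hadj⟩
      refine ⟨?_, hlt⟩
      by_cases hσ : (G σ).Adj z y
      · exact ((hseo v hv z hz y hy hvz hlt hylt σ).1 hadj.symm hσ).symm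
      · exact (hz2 σ v hv y hy hvz hadj.symm (hτ hσ).symm).symm
    · rintro ⟨hadj, hlt⟩
      refine ⟨hlt, ?_⟩
      have hvy : y ≠ v := by rintro rfl; exact lt_irrefl _ hlt
      by_cases hσ : (G σ).Adj z y
      · exact hz1 σ y hy v hv hσ hadj hvy
      · exact ((hseo v hv z hz y hy hvz hlt hylt σ).2 hadj.symm (hτ hσ)).symm
  -- degree counts of later neighbours of z
  have hyD : ∀ (σ : Bool) (y : V), y ∈ LN → cD G σ s r y = cLe G σ s r z (r y) := by
    intro σ y hyLN
    obtain ⟨hy, hyor, hylt⟩ := memLN.mp hyLN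
    set C := s.filter (fun v => (G σ).Adj z v ∧ r v < r y) with hC
    have hzC : z ∉ C := by
      simp only [hC, Finset.mem_filter]
      rintro ⟨-, hadj, -⟩
      exact (G σ).irrefl hadj
    have hyC : y ∉ C := by
      simp only [hC, Finset.mem_filter]
      rintro ⟨-, -, h⟩
      exact lt_irrefl _ h
    have h1 : s.filter (fun v => r v < r y ∧ (G σ).Adj y v)
        = C ∪ (if (G σ).Adj z y then {z} else ∅) := by
      ext v
      simp only [hC, Finset.mem_filter, Finset.mem_union]
      constructor
      · rintro ⟨hv, hlt, hadj⟩
        by_cases hvz : v = z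
        · have hzy : (G σ).Adj z y := by
            rw [← hvz]; exact hadj.symm
          right
          rw [if_pos hzy]
          exact Finset.mem_singleton.mpr hvz
        · exact Or.inl ⟨hv, (fact1 σ y hy hyor hylt v hv hvz).mp ⟨hlt, hadj⟩⟩
      · rintro (⟨hv, hcond⟩ | hite)
        · refine ⟨hv, (fact1 σ y hy hyor hylt v hv hcond.1.ne').mpr hcond⟩
        · by_cases hzy : (G σ).Adj z y
          · rw [if_pos hzy, Finset.mem_singleton] at hite
            exact ⟨by rw [hite]; exact hz, by rw [hite]; exact hylt,
              by rw [hite]; exact hzy.symm⟩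
          · rw [if_neg hzy] at hite
            exact absurd hite (Finset.notMem_empty v)
    have h2 : s.filter (fun v => (G σ).Adj z v ∧ r v ≤ r y)
        = C ∪ (if (G σ).Adj z y then {y} else ∅) := by
      ext v
      simp only [hC, Finset.mem_filter, Finset.mem_union]
      constructor
      · rintro ⟨hv, hadj, hle⟩
        rcases lt_or_eq_of_le hle with h | h
        · exact Or.inl ⟨hv, hadj, h⟩
        · have hvy : v = y := hr hv hy h
          subst hvy
          rw [if_pos hadj]
          exact Or.inr (Finset.mem_singleton_self v)
      · rintro (⟨hv, hadj, hlt⟩ | h)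
        · exact ⟨hv, hadj, le_of_lt hlt⟩
        · by_cases hzy : (G σ).Adj z y
          · rw [if_pos hzy, Finset.mem_singleton] at h
            subst h
            exact ⟨hy, hzy, le_refl _⟩
          · rw [if_neg hzy] at h
            exact absurd h (Finset.notMem_empty v)
    unfold cD cLe
    rw [h1, h2, card_union_ite hzC, card_union_ite hyC]
  have hyE : ∀ (σ : Bool) (y : V), y ∈ LN →
      cD G σ (s.erase z) r y = cLt G σ s r z (r y) := by
    intro σ y hyLN
    obtain ⟨hy, hyor, hylt⟩ := memLN.mp hyLN
    unfold cD cLt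
    apply congrArg Finset.card
    ext v
    simp only [Finset.mem_filter, Finset.mem_erase]
    constructor
    · rintro ⟨⟨hvz, hv⟩, hcond⟩
      exact ⟨hv, (fact1 σ y hy hyor hylt v hv hvz).mp hcond⟩
    · rintro ⟨hv, hadj, hlt⟩
      exact ⟨⟨hadj.ne', hv⟩, (fact1 σ y hy hyor hylt v hv hadj.ne').mpr ⟨hadj, hlt⟩⟩
  have hzD : ∀ σ : Bool, cD G σ s r z = cLe G σ s r z (r z) := by
    intro σ
    unfold cD cLe
    apply congrArg Finset.card
    apply Finset.filter_congr
    intro v hv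
    constructor
    · rintro ⟨hlt, hadj⟩
      exact ⟨hadj, le_of_lt hlt⟩
    · rintro ⟨hadj, hle⟩
      exact ⟨lt_of_le_of_ne hle (fun he => hadj.ne' (hr hv hz he)), hadj⟩
  have hdeg : ∀ σ : Bool, (s.filter fun v => (G σ).Adj z v).card = cTp G σ s r z LN := by
    intro σ
    unfold cTp
    apply congrArg Finset.card
    apply Finset.filter_congr
    intro v hv
    constructor
    · intro hadj
      refine ⟨hadj, ?_⟩
      by_cases h : r v < r z
      · exact Or.inl h
      · have hzv : r z < r v :=
          lt_of_le_of_ne (not_lt.mp h) (fun he => hadj.ne' (hr hv hz he.symm))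
        exact Or.inr (memLN.mpr ⟨hv, adj_or hadj, hzv⟩)
    · exact fun h => h.1
  have hRD : ∀ (σ : Bool) (x : V), x ∈ s.erase z → x ∉ LN →
      cD G σ s r x = cD G σ (s.erase z) r x := by
    intro σ x hx hxLN
    unfold cD
    apply congrArg Finset.card
    ext v
    simp only [Finset.mem_filter, Finset.mem_erase]
    constructor
    · rintro ⟨hv, hlt, hadj⟩
      refine ⟨⟨?_, hv⟩, hlt, hadj⟩
      rintro rfl
      exact hxLN (memLN.mpr ⟨(Finset.mem_erase.mp hx).2, adj_or hadj.symm, hlt⟩)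
    · rintro ⟨⟨-, hv⟩, h⟩
      exact ⟨hv, h⟩
  -- assemble the multisets
  set R : Finset V := (s.erase z).filter (fun x => x ∉ LN) with hRdef
  have hLNsub : LN ⊆ s.erase z := by
    intro x hx
    obtain ⟨hxs, hor, -⟩ := memLN.mp hx
    refine Finset.mem_erase.mpr ⟨?_, hxs⟩
    rcases hor with h | h
    · exact h.ne'
    · exact h.ne'
  have hEval : (s.erase z).val = LN.val + R.val := by
    have h1 : LN = (s.erase z).filter (fun x => x ∈ LN) := by
      ext x
      simp only [Finset.mem_filter]
      exact ⟨fun h => ⟨hLNsub h, h⟩, fun h => h.2⟩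
    conv_lhs => rw [← Multiset.filter_add_not (fun x => x ∈ LN) (s.erase z).val]
    rw [hRdef]
    congr 1
    conv_rhs => rw [h1]
    rw [Finset.filter_val]
  have hsval : s.val = z ::ₘ (s.erase z).val := by
    rw [Finset.erase_val]
    exact (Multiset.cons_erase (Finset.mem_val.mpr hz)).symm
  have e1 : LN.val.map (Dm G s r) = LN.val.map (fun y => pLe G s r z (r y)) :=
    Multiset.map_congr rfl (fun y hy =>
      Prod.ext (hyD true y (Finset.mem_val.mp hy)) (hyD false y (Finset.mem_val.mp hy)))
  have e2 : LN.val.map (fun y => pLt G s r z (r y)) = LN.val.map (Dm G (s.erase z) r) :=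
    Multiset.map_congr rfl (fun y hy =>
      (Prod.ext (hyE true y (Finset.mem_val.mp hy)) (hyE false y (Finset.mem_val.mp hy))).symm)
  have e3 : R.val.map (Dm G s r) = R.val.map (Dm G (s.erase z) r) :=
    Multiset.map_congr rfl (fun x hx => by
      have hx' := Finset.mem_val.mp hx
      rw [hRdef] at hx'
      obtain ⟨hx1, hx2⟩ := Finset.mem_filter.mp hx'
      exact Prod.ext (hRD true x hx1 hx2) (hRD false x hx1 hx2))
  have e4 : Dm G s r z = pLe G s r z (r z) := Prod.ext (hzD true) (hzD false)
  have e5 : pTp G s r z LN = pDeg G s z :=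
    Prod.ext (hdeg true).symm (hdeg false).symm
  have hTs : ∀ y ∈ LN, y ∈ s ∧ ((G true).Adj z y ∨ (G false).Adj z y) ∧ r z < r y :=
    fun y hy => memLN.mp hy
  have hdc : ∀ a ∈ s, ((G true).Adj z a ∨ (G false).Adj z a) → r z < r a →
      ∀ b ∈ LN, r a ≤ r b → a ∈ LN :=
    fun a ha hor hlt _ _ _ => memLN.mpr ⟨ha, hor, hlt⟩
  have hch := chain s r hr z hz LN hTs hdc
  rw [hsval, Multiset.map_cons, hEval, Multiset.map_add, Multiset.map_add, e4, e1, e3,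
    ← Multiset.singleton_add]
  calc {pLe G s r z (r z)} + (LN.val.map (fun y => pLe G s r z (r y))
        + R.val.map (Dm G (s.erase z) r))
      = (LN.val.map (fun y => pLe G s r z (r y)) + {pLe G s r z (r z)})
        + R.val.map (Dm G (s.erase z) r) := by abel
    _ = (LN.val.map (fun y => pLt G s r z (r y)) + {pTp G s r z LN})
        + R.val.map (Dm G (s.erase z) r) := by rw [hch]
    _ = (LN.val.map (Dm G (s.erase z) r) + R.val.map (Dm G (s.erase z) r))
        + {pDeg G s z} := by rw [e2, e5]; abel

end Key

/-- Main invariance lemma by strong induction on the vertex set. -/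
lemma gen : ∀ s : Finset V, ∀ r q : V → ℕ, Set.InjOn r s → Set.InjOn q s →
    SEOon G s r → SEOon G s q →
    s.val.map (Dm G s r) = s.val.map (Dm G s q) := by
  intro s
  induction s using Finset.strongInduction with
  | _ s ih =>
    intro r q hr hq hsr hsq
    rcases s.eq_empty_or_nonempty with rfl | hne
    · simp
    · obtain ⟨z, hz, hmax⟩ := s.exists_max_image q hne
      have hlt : ∀ u ∈ s, u ≠ z → q u < q z := fun u hu hne' =>
        lt_of_le_of_ne (hmax u hu) (fun he => hne' (hq hu hz he))
      have hz1 : ∀ σ : Bool, ∀ u ∈ s, ∀ v ∈ s,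
          (G σ).Adj z u → (G σ).Adj z v → u ≠ v → (G σ).Adj u v := by
        intro σ u hu v hv h1 h2 huv
        exact (hsq u hu v hv z hz huv (hlt u hu h1.ne') (hlt v hv h2.ne') σ).1 h1.symm h2.symm
      have hz2 : ∀ σ : Bool, ∀ u ∈ s, ∀ w ∈ s,
          u ≠ z → (G σ).Adj u w → (G (!σ)).Adj w z → (G σ).Adj u z := by
        intro σ u hu w hw huz h1 h2
        exact (hsq u hu w hw z hz h1.ne (hlt u hu huz) (hlt w hw h2.ne) σ).2 h1 h2
      have hsub : (↑(s.erase z) : Set V) ⊆ ↑s :=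
        Finset.coe_subset.mpr (Finset.erase_subset _ _)
      have hrE : Set.InjOn r (s.erase z) := hr.mono hsub
      have hqE : Set.InjOn q (s.erase z) := hq.mono hsub
      have hsrE : SEOon G (s.erase z) r := fun u hu v hv w hw =>
        hsr u (Finset.mem_of_mem_erase hu) v (Finset.mem_of_mem_erase hv)
          w (Finset.mem_of_mem_erase hw)
      have hsqE : SEOon G (s.erase z) q := fun u hu v hv w hw =>
        hsq u (Finset.mem_of_mem_erase hu) v (Finset.mem_of_mem_erase hv)
          w (Finset.mem_of_mem_erase hw)
      rw [key s r hr hsr z hz hz1 hz2, key s q hq hsq z hz hz1 hz2,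
        ih (s.erase z) (Finset.erase_ssubset hz) r q hrE hqE hsrE hsqE]

end SEOProofAux

section Reindex

open SEOProofAux

variable {V : Type*} [Fintype V] [DecidableEq V]
variable (G : Bool → SimpleGraph V) [∀ σ : Bool, DecidableRel (G σ).Adj]

lemma reindex (ν : V ≃ Fin (Fintype.card V)) :
    (Finset.univ.val.map fun i : Fin (Fintype.card V) =>
        ((Finset.univ.filter fun v : V => ν v ≤ i ∧ (G true).Adj (ν.symm i) v).card,
         (Finset.univ.filter fun v : V => ν v ≤ i ∧ (G false).Adj (ν.symm i) v).card)) =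
    Finset.univ.val.map (Dm G Finset.univ (fun v => ((ν v : ℕ)))) := by
  have huniv : (Finset.univ : Finset (Fin (Fintype.card V))).val
      = Finset.univ.val.map ν := by
    rw [← Finset.map_univ_equiv ν]
    rfl
  rw [huniv, Multiset.map_map]
  apply Multiset.map_congr rfl
  intro w _
  have hiff : ∀ σ : Bool,
      (Finset.univ.filter fun v : V => ν v ≤ ν w ∧ (G σ).Adj (ν.symm (ν w)) v)
        = Finset.univ.filter fun v : V =>
            ((ν v : ℕ)) < ((ν w : ℕ)) ∧ (G σ).Adj w v := by
    intro σ
    apply Finset.filter_congr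
    intro v _
    rw [Equiv.symm_apply_apply]
    constructor
    · rintro ⟨hle, hadj⟩
      refine ⟨?_, hadj⟩
      have hne : ν v ≠ ν w := fun he => hadj.ne' (ν.injective he)
      exact Fin.lt_def.mp (lt_of_le_of_ne hle hne)
    · rintro ⟨hlt, hadj⟩
      exact ⟨le_of_lt (Fin.lt_def.mpr hlt), hadj⟩
  simp only [Function.comp]
  rw [hiff true, hiff false]
  rfl

end Reindex

theorem statement_11 {V : Type*} [Fintype V] [DecidableEq V] (G : Bool → SimpleGraph V)
    [∀ σ : Bool, DecidableRel (G σ).Adj] (hdisj : SDisjoint G)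
    (ν μ : V ≃ Fin (Fintype.card V)) (hν : IsSEO G ν) (hμ : IsSEO G μ) :
    (Finset.univ.val.map fun i : Fin (Fintype.card V) =>
        ((Finset.univ.filter fun v : V => ν v ≤ i ∧ (G true).Adj (ν.symm i) v).card,
         (Finset.univ.filter fun v : V => ν v ≤ i ∧ (G false).Adj (ν.symm i) v).card)) =
    (Finset.univ.val.map fun i : Fin (Fintype.card V) =>
        ((Finset.univ.filter fun v : V => μ v ≤ i ∧ (G true).Adj (μ.symm i) v).card,
         (Finset.univ.filter fun v : V => μ v ≤ i ∧ (G false).Adj (μ.symm i) v).card)) := by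
  have hinj : ∀ ρ : V ≃ Fin (Fintype.card V),
      Set.InjOn (fun v => ((ρ v : ℕ))) (Finset.univ : Finset V) :=
    fun ρ a _ b _ h => ρ.injective (Fin.val_injective h)
  have hseo : ∀ ρ : V ≃ Fin (Fintype.card V), IsSEO G ρ →
      SEOProofAux.SEOon G (Finset.univ : Finset V) (fun v => ((ρ v : ℕ))) := by
    intro ρ hρ u _ v _ w _ hne h1 h2 σ
    exact hρ u v w hne (Fin.lt_def.mpr h1) (Fin.lt_def.mpr h2) σ
  rw [reindex G ν, reindex G μ]
  exact SEOProofAux.gen Finset.univ _ _ (hinj ν) (hinj μ) (hseo ν hν) (hseo μ hμ)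
end

section
/- No σ-mountain is signed-eliminable: for n ≥ 3, the signed graph on vertices v_1,...,v_n, w with edges v_i v_{i+1} ∈ E_{-σ} for 1 ≤ i ≤ n-1, w v_i ∈ E_σ for 2 ≤ i ≤ n-1, and no other edges, admits no signed elimination ordering. -/
open SimpleGraph

lemma exists_simplicial' {V : Type*} (G : Bool → SimpleGraph V) (hd : SDisjoint G)
    (x0 : V) {N : ℕ} (ν : V ≃ Fin N) (hseo : IsSEO G ν) :
    ∃ m : V, SignedSimplicial G m := by
  have hn : 0 < N := (ν x0).pos
  set m : V := ν.symm ⟨N-1, by omega⟩ with hm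
  have hνm : (ν m).val = N - 1 := by simp [hm]
  have hlt : ∀ x : V, x ≠ m → ν x < ν m := by
    intro x hx
    have h2 : ν x ≠ ν m := fun h => hx (ν.injective h)
    have h3 : (ν x).val < N := (ν x).isLt
    rw [Fin.lt_def, hνm]
    have : (ν x).val ≠ (ν m).val := fun h => h2 (Fin.ext h)
    omega
  refine ⟨m, ?_, ?_⟩
  · intro τ x hx y hy hxy
    rcases hx with rfl | hx
    · rcases hy with rfl | hy
      · exact absurd rfl hxy
      · exact hy
    · rcases hy with rfl | hy
      · exact hx.symm
      · have hxa : (G τ).Adj m x := hx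
        have hya : (G τ).Adj m y := hy
        exact (hseo x y m hxy (hlt x hxa.ne') (hlt y hya.ne') τ).1 hxa.symm hya.symm
  · intro τ u y huy hym
    have hum : u ≠ m := by
      rintro rfl
      cases τ with
      | true => exact hd y _ ⟨hym, by simpa using huy.symm⟩
      | false => exact hd y _ ⟨by simpa using huy.symm, hym⟩
    have h := (hseo u y m huy.ne (hlt u hum) (hlt y hym.ne) (!τ)).2 huy
    rw [Bool.not_not] at h
    exact h hym

theorem statement_12 {V : Type*} (G : Bool → SimpleGraph V) (σ : Bool)
    (n : ℕ) (hn : 3 ≤ n) (v : Fin n → V) (w : V)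
    (hinj : Function.Injective v) (hw : ∀ i : Fin n, v i ≠ w)
    (hsurj : ∀ x : V, x = w ∨ ∃ i : Fin n, x = v i)
    (hpath : ∀ i j : Fin n, (G (!σ)).Adj (v i) (v j) ↔ (i.val + 1 = j.val ∨ j.val + 1 = i.val))
    (hvσ : ∀ i j : Fin n, ¬ (G σ).Adj (v i) (v j))
    (hwσ : ∀ i : Fin n, (G σ).Adj w (v i) ↔ (1 ≤ i.val ∧ i.val ≤ n - 2))
    (hwm : ∀ i : Fin n, ¬ (G (!σ)).Adj w (v i)) :
    ¬ SignedEliminable G := by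
  rintro ⟨N, ν, hseo⟩
  have hd : SDisjoint G := by
    intro a b hab
    have hσ : (G σ).Adj a b ∧ (G (!σ)).Adj a b := by
      cases σ with
      | true => exact ⟨hab.1, by simpa using hab.2⟩
      | false => exact ⟨hab.2, by simpa using hab.1⟩
    obtain ⟨h1, h2⟩ := hσ
    rcases hsurj a with rfl | ⟨i, rfl⟩
    · rcases hsurj b with rfl | ⟨j, rfl⟩
      · exact h1.ne rfl
      · exact hwm j h2
    · rcases hsurj b with rfl | ⟨j, rfl⟩
      · exact hwm i h2.symm
      · exact hvσ i j h1
  obtain ⟨m, hS1, hS2⟩ := exists_simplicial' G hd w ν hseo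
  rcases hsurj m with rfl | ⟨i, rfl⟩
  · have h01 : (G (!σ)).Adj (v ⟨0, by omega⟩) (v ⟨1, by omega⟩) := by
      rw [hpath]; left; rfl
    have h1w : (G σ).Adj (v ⟨1, by omega⟩) m :=
      ((hwσ ⟨1, by omega⟩).mpr (by constructor <;> simp <;> omega)).symm
    exact hwm ⟨0, by omega⟩ (hS2 σ (v ⟨0, by omega⟩) (v ⟨1, by omega⟩) h01 h1w).symm
  · by_cases hi0 : i.val = 0
    · have hw1 : (G σ).Adj w (v ⟨1, by omega⟩) :=
        (hwσ ⟨1, by omega⟩).mpr (by constructor <;> simp <;> omega)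
      have h10 : (G (!σ)).Adj (v ⟨1, by omega⟩) (v i) := by
        rw [hpath]; right; simp [hi0]
      have h := hS2 (!σ) w (v ⟨1, by omega⟩) (by rw [Bool.not_not]; exact hw1) h10
      rw [Bool.not_not] at h
      have := (hwσ i).mp h
      omega
    · by_cases hin : i.val = n - 1
      · have hw2 : (G σ).Adj w (v ⟨n-2, by omega⟩) :=
          (hwσ ⟨n-2, by omega⟩).mpr (by constructor <;> simp <;> omega)
        have h2i : (G (!σ)).Adj (v ⟨n-2, by omega⟩) (v i) := by
          rw [hpath]; left; simp [hin]; omega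
        have h := hS2 (!σ) w (v ⟨n-2, by omega⟩) (by rw [Bool.not_not]; exact hw2) h2i
        rw [Bool.not_not] at h
        have := (hwσ i).mp h
        omega
      · -- interior: 1 ≤ i.val ≤ n-2
        have hil : 1 ≤ i.val := by omega
        have hiu : i.val ≤ n - 2 := by have := i.isLt; omega
        have hadj1 : (G (!σ)).Adj (v i) (v ⟨i.val - 1, by omega⟩) := by
          rw [hpath]; right; simp; omega
        have hadj2 : (G (!σ)).Adj (v i) (v ⟨i.val + 1, by have := i.isLt; omega⟩) := by
          rw [hpath]; left; rfl
        have hne : v ⟨i.val - 1, by omega⟩ ≠ v ⟨i.val + 1, by have := i.isLt; omega⟩ := by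
          intro h
          have := hinj h
          have h2 := Fin.val_eq_of_eq this
          simp only [Fin.val_mk] at h2
          omega
        have hmem1 : v ⟨i.val - 1, by omega⟩ ∈ insert (v i) ((G (!σ)).neighborSet (v i)) :=
          Set.mem_insert_iff.mpr (Or.inr hadj1)
        have hmem2 : v ⟨i.val + 1, by have := i.isLt; omega⟩ ∈
            insert (v i) ((G (!σ)).neighborSet (v i)) :=
          Set.mem_insert_iff.mpr (Or.inr hadj2)
        have h := hS1 (!σ) hmem1 hmem2 hne
        rw [hpath] at h
        simp at h <;> omega
end

section
/- No σ-hill is signed-eliminable: for n ≥ 2, the signed graph on vertices v_1,...,v_n, w_1, w_2 with edges v_i v_{i+1} ∈ E_{-σ} (1 ≤ i ≤ n-1), w_1 w_2 ∈ E_σ, w_1 v_i ∈ E_σ (1 ≤ i ≤ n-1), w_2 v_i ∈ E_σ (2 ≤ i ≤ n), and no other edges, admits no signed elimination ordering. -/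
open SimpleGraph

theorem statement_13 {V : Type*} (G : Bool → SimpleGraph V) (σ : Bool)
    (n : ℕ) (hn : 2 ≤ n) (v : Fin n → V) (w₁ w₂ : V)
    (hinj : Function.Injective v) (hw₁ : ∀ i : Fin n, v i ≠ w₁) (hw₂ : ∀ i : Fin n, v i ≠ w₂)
    (hww : w₁ ≠ w₂)
    (hsurj : ∀ x : V, x = w₁ ∨ x = w₂ ∨ ∃ i : Fin n, x = v i)
    (hpath : ∀ i j : Fin n, (G (!σ)).Adj (v i) (v j) ↔ (i.val + 1 = j.val ∨ j.val + 1 = i.val))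
    (hvσ : ∀ i j : Fin n, ¬ (G σ).Adj (v i) (v j))
    (hw12 : (G σ).Adj w₁ w₂) (hw12m : ¬ (G (!σ)).Adj w₁ w₂)
    (hw1σ : ∀ i : Fin n, (G σ).Adj w₁ (v i) ↔ i.val ≤ n - 2)
    (hw2σ : ∀ i : Fin n, (G σ).Adj w₂ (v i) ↔ 1 ≤ i.val)
    (hw1m : ∀ i : Fin n, ¬ (G (!σ)).Adj w₁ (v i))
    (hw2m : ∀ i : Fin n, ¬ (G (!σ)).Adj w₂ (v i)) :
    ¬ SignedEliminable G := by
  rintro ⟨m, ν, hseo⟩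
  have hm : 0 < m := (ν w₁).pos
  set x := ν.symm ⟨m - 1, by omega⟩ with hxdef
  have hνx : (ν x).val = m - 1 := by simp [hxdef]
  have hmax : ∀ y : V, y ≠ x → ν y < ν x := by
    intro y hy
    have h1 : (ν y).val ≠ (ν x).val := fun h => hy (ν.injective (Fin.ext h))
    have h2 : (ν y).val < m := (ν y).isLt
    exact Fin.lt_iff_val_lt_val.mpr (by omega)
  rcases hsurj x with hx1 | hx2 | ⟨i, hxi⟩
  · -- x = w₁
    rw [hx1] at hmax
    have h0 : (0 : ℕ) < n := by omega
    obtain ⟨hE1, _⟩ := hseo w₂ (v ⟨0, h0⟩) w₁ (fun h => hw₂ _ h.symm)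
      (hmax _ hww.symm) (hmax _ (hw₁ _)) σ
    have hadj := hE1 hw12.symm ((hw1σ ⟨0, h0⟩).mpr (Nat.zero_le _)).symm
    have := (hw2σ ⟨0, h0⟩).mp hadj
    simp at this
  · -- x = w₂
    rw [hx2] at hmax
    have hlt : n - 1 < n := by omega
    obtain ⟨hE1, _⟩ := hseo w₁ (v ⟨n - 1, hlt⟩) w₂ (fun h => hw₁ _ h.symm)
      (hmax _ hww) (hmax _ (hw₂ _)) σ
    have hadj := hE1 hw12 ((hw2σ ⟨n - 1, hlt⟩).mpr (show 1 ≤ n - 1 by omega)).symm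
    have := (hw1σ ⟨n - 1, hlt⟩).mp hadj
    simp only [] at this
    omega
  · -- x = v i
    rw [hxi] at hmax
    set k := i.val with hk
    have hkn : k < n := i.isLt
    rcases Nat.eq_zero_or_pos k with hk0 | hk0
    · -- k = 0
      have h1 : (1 : ℕ) < n := by omega
      have hne : w₂ ≠ v ⟨1, h1⟩ := fun h => hw₂ _ h.symm
      have hvne : v ⟨1, h1⟩ ≠ v i := by
        intro h
        have := congrArg Fin.val (hinj h)
        simp only [] at this
        omega
      obtain ⟨_, hE2⟩ := hseo w₂ (v ⟨1, h1⟩) (v i) hne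
        (hmax _ (fun h => hw₂ _ h.symm)) (hmax _ hvne) σ
      have hadj := hE2 ((hw2σ ⟨1, h1⟩).mpr (le_refl _))
        ((hpath ⟨1, h1⟩ i).mpr (Or.inr (show k + 1 = 1 by omega)))
      have := (hw2σ i).mp hadj
      omega
    · -- k ≥ 1; subcase k = n - 1 or middle
      rcases Nat.lt_or_ge k (n - 1) with hkm | hkm
      · -- middle: 0 < k < n - 1
        have ha : k - 1 < n := by omega
        have hb : k + 1 < n := by omega
        have hvne : v ⟨k - 1, ha⟩ ≠ v ⟨k + 1, hb⟩ := by
          intro h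
          have := congrArg Fin.val (hinj h)
          simp only [] at this
          omega
        have hane : v ⟨k - 1, ha⟩ ≠ v i := by
          intro h
          have := congrArg Fin.val (hinj h)
          simp only [] at this
          omega
        have hbne : v ⟨k + 1, hb⟩ ≠ v i := by
          intro h
          have := congrArg Fin.val (hinj h)
          simp only [] at this
          omega
        obtain ⟨hE1, _⟩ := hseo (v ⟨k - 1, ha⟩) (v ⟨k + 1, hb⟩) (v i) hvne
          (hmax _ hane) (hmax _ hbne) (!σ)
        have hadj := hE1 ((hpath ⟨k - 1, ha⟩ i).mpr (Or.inl (show k - 1 + 1 = k by omega)))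
          ((hpath ⟨k + 1, hb⟩ i).mpr (Or.inr (show k + 1 = k + 1 by omega)))
        have := (hpath ⟨k - 1, ha⟩ ⟨k + 1, hb⟩).mp hadj
        simp only [] at this
        omega
      · -- k = n - 1
        have ha : n - 2 < n := by omega
        have hne : w₁ ≠ v ⟨n - 2, ha⟩ := fun h => hw₁ _ h.symm
        have hvne : v ⟨n - 2, ha⟩ ≠ v i := by
          intro h
          have := congrArg Fin.val (hinj h)
          simp only [] at this
          omega
        obtain ⟨_, hE2⟩ := hseo w₁ (v ⟨n - 2, ha⟩) (v i) hne
          (hmax _ (fun h => hw₁ _ h.symm)) (hmax _ hvne) σ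
        have hadj := hE2 ((hw1σ ⟨n - 2, ha⟩).mpr (le_refl _))
          ((hpath ⟨n - 2, ha⟩ i).mpr (Or.inl (show n - 2 + 1 = k by omega)))
        have := (hw1σ i).mp hadj
        omega
end

section
/- Let G be a signed-eliminable signed graph and u, v, w, x four distinct vertices with u ~_σ v, v ~_{-σ} w, w ~_σ x for some sign σ. Then u ~_σ x, and moreover either u ~_σ w or v ~_σ x. -/
open SimpleGraph

theorem statement_14 {V : Type*} (G : Bool → SimpleGraph V) (hdisj : SDisjoint G)
    (hSE : SignedEliminable G) (σ : Bool) (u v w x : V)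
    (huv : u ≠ v) (huw : u ≠ w) (hux : u ≠ x) (hvw : v ≠ w) (hvx : v ≠ x) (hwx : w ≠ x)
    (h1 : (G σ).Adj u v) (h2 : (G (!σ)).Adj v w) (h3 : (G σ).Adj w x) :
    (G σ).Adj u x ∧ ((G σ).Adj u w ∨ (G σ).Adj v x) := by
  obtain ⟨n, ν, hseo⟩ := hSE
  have E1 : ∀ a b c : V, a ≠ b → ν a < ν c → ν b < ν c → ∀ τ : Bool,
      (G τ).Adj a c → (G τ).Adj b c → (G τ).Adj a b :=
    fun a b c hab hac hbc τ => (hseo a b c hab hac hbc τ).1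
  have E2 : ∀ a b c : V, a ≠ b → ν a < ν c → ν b < ν c → ∀ τ : Bool,
      (G τ).Adj a b → (G (!τ)).Adj b c → (G τ).Adj a c :=
    fun a b c hab hac hbc τ => (hseo a b c hab hac hbc τ).2
  have tri : ∀ {a b : V}, a ≠ b → ν a < ν b ∨ ν b < ν a :=
    fun {a b} h => (ν.injective.ne h).lt_or_gt
  -- case: w is the maximum
  have caseW : ν u < ν w → ν v < ν w → ν x < ν w →
      (G σ).Adj u x ∧ ((G σ).Adj u w ∨ (G σ).Adj v x) := by
    intro h_u h_v h_x
    have huwA : (G σ).Adj u w := E2 u v w huv h_u h_v σ h1 h2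
    exact ⟨E1 u x w hux h_u h_x σ huwA h3.symm, Or.inl huwA⟩
  -- case: v is the maximum
  have caseV : ν u < ν v → ν w < ν v → ν x < ν v →
      (G σ).Adj u x ∧ ((G σ).Adj u w ∨ (G σ).Adj v x) := by
    intro h_u h_w h_x
    have hxvA : (G σ).Adj x v := E2 x w v hwx.symm h_x h_w σ h3.symm h2.symm
    exact ⟨E1 u x v hux h_u h_x σ h1 hxvA, Or.inr hxvA.symm⟩
  -- case: u is the maximum
  have caseU : ν v < ν u → ν w < ν u → ν x < ν u →
      (G σ).Adj u x ∧ ((G σ).Adj u w ∨ (G σ).Adj v x) := by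
    intro h_v h_w h_x
    have hwuA : (G (!σ)).Adj w u := by
      refine E2 w v u hvw.symm h_w h_v (!σ) h2.symm ?_
      rw [Bool.not_not]; exact h1.symm
    have hxuA : (G σ).Adj x u := E2 x w u hwx.symm h_x h_w σ h3.symm hwuA
    exact ⟨hxuA.symm, Or.inr (E1 v x u hvx h_v h_x σ h1.symm hxuA)⟩
  -- case: x is the maximum
  have caseX : ν u < ν x → ν v < ν x → ν w < ν x →
      (G σ).Adj u x ∧ ((G σ).Adj u w ∨ (G σ).Adj v x) := by
    intro h_u h_v h_w
    have hvxA : (G (!σ)).Adj v x := by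
      refine E2 v w x hvw h_v h_w (!σ) h2 ?_
      rw [Bool.not_not]; exact h3
    have huxA : (G σ).Adj u x := E2 u v x huv h_u h_v σ h1 hvxA
    exact ⟨huxA, Or.inl (E1 u w x huw h_u h_w σ huxA h3)⟩
  rcases tri huw with huw' | hwu' <;> rcases tri hvx with hvx' | hxv'
  · rcases tri hwx with hwx' | hxw'
    · exact caseX (huw'.trans hwx') hvx' hwx'
    · exact caseW huw' (hvx'.trans hxw') hxw'
  · rcases tri hvw with hvw' | hwv'
    · exact caseW huw' hvw' (hxv'.trans hvw')
    · exact caseV (huw'.trans hwv') hwv' hxv'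
  · rcases tri hux with hux' | hxu'
    · exact caseX hux' hvx' (hwu'.trans hux')
    · exact caseU (hvx'.trans hxu') hwu' hxu'
  · rcases tri huv with huv' | hvu'
    · exact caseV huv' (hwu'.trans huv') hxv'
    · exact caseU hvu' hwu' (hxv'.trans hvu')
end

section
/- Let G be a connected signed-eliminable signed graph with E_+ ≠ ∅ and E_- ≠ ∅. Then there exists a signed-simplicial vertex v of G with N_+(v) ≠ ∅ and N_-(v) ≠ ∅. -/
open SimpleGraph

theorem statement_17 {V : Type*} [Fintype V] (G : Bool → SimpleGraph V) (hdisj : SDisjoint G)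
    (hconn : ((G true) ⊔ (G false)).Connected) (hSE : SignedEliminable G)
    (hp : ∃ u v : V, (G true).Adj u v) (hm : ∃ u v : V, (G false).Adj u v) :
    ∃ v : V, SignedSimplicial G v ∧
      (∃ w : V, (G true).Adj v w) ∧ (∃ w : V, (G false).Adj v w) := by
  classical
  obtain ⟨n, ν, hseo⟩ := hSE
  set Both : V → Prop := fun v => (∃ w, (G true).Adj v w) ∧ (∃ w, (G false).Adj v w) with hBoth
  -- Step 1: some vertex has both a positive and a negative neighbor
  have hS : ∃ v, Both v := by
    by_contra hno
    rw [not_exists] at hno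
    obtain ⟨p, q, hpq⟩ := hp
    obtain ⟨m, m', hmm'⟩ := hm
    have key : ∀ u v : V, ((G true) ⊔ (G false)).Walk u v →
        (∃ w, (G true).Adj u w) → (∃ w, (G true).Adj v w) := by
      intro u v w
      induction w with
      | nil => exact fun h => h
      | cons h tail ih =>
        intro hu
        apply ih
        cases h with
        | inl h => exact ⟨_, h.symm⟩
        | inr h => exact absurd (⟨hu, ⟨_, h⟩⟩ : Both _) (hno _)
    obtain ⟨w⟩ := hconn.preconnected p m
    have hPm := key p m w ⟨q, hpq⟩
    exact absurd (⟨hPm, ⟨m', hmm'⟩⟩ : Both m) (hno m)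
  -- Step 2: take the ν-maximal such vertex
  have : DecidablePred Both := Classical.decPred _
  set T : Finset (Fin n) := Finset.univ.filter (fun i => Both (ν.symm i)) with hT
  have hTne : T.Nonempty := by
    obtain ⟨v, hv⟩ := hS
    exact ⟨ν v, Finset.mem_filter.mpr ⟨Finset.mem_univ _, by simpa using hv⟩⟩
  set i0 : Fin n := T.max' hTne with hi0
  set b : V := ν.symm i0 with hb
  have hνb : ν b = i0 := by simp [hb]
  have hBb : Both b := (Finset.mem_filter.mp (T.max'_mem hTne)).2
  have hmax : ∀ v : V, Both v → ν v ≤ i0 := by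
    intro v hv
    exact T.le_max' _ (Finset.mem_filter.mpr ⟨Finset.mem_univ _, by simpa using hv⟩)
  -- b has an opposite-sign neighbor for each σ
  have hopp : ∀ σ : Bool, ∃ c, (G (!σ)).Adj b c := by
    intro σ; cases σ
    · exact hBb.1
    · exact hBb.2
  have hsame : ∀ σ : Bool, ∀ {x y : V}, (G σ).Adj x y → (G (!σ)).Adj x y → False := by
    intro σ x y h1 h2
    cases σ
    · exact hdisj x y ⟨h2, h1⟩
    · exact hdisj x y ⟨h1, h2⟩
  have hboth_of : ∀ σ : Bool, ∀ {x u w : V}, (G σ).Adj x u → (G (!σ)).Adj x w → Both x := by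
    intro σ x u w h1 h2
    cases σ
    · exact ⟨⟨w, h2⟩, ⟨u, h1⟩⟩
    · exact ⟨⟨u, h1⟩, ⟨w, h2⟩⟩
  -- Step 3: every neighbor of b is below b
  have hbelow : ∀ σ : Bool, ∀ w : V, (G σ).Adj b w → ν w < ν b := by
    intro σ w hw
    by_contra hge
    push_neg at hge
    have hne : ν b ≠ ν w := fun h => hw.ne (ν.injective h)
    have hlt : ν b < ν w := lt_of_le_of_ne hge hne
    obtain ⟨c, hc⟩ := hopp σ
    rcases lt_trichotomy (ν c) (ν w) with h1 | h1 | h1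
    · -- c below w : deduce c ~!σ w, so w has both signs
      have := (hseo c b w hc.symm.ne h1 hlt (!σ)).2 hc.symm (by simpa [Bool.not_not] using hw)
      have hBw : Both w := hboth_of σ hw.symm this.symm
      exact absurd (hmax w hBw) (by rw [hνb] at hlt; exact not_le.mpr hlt)
    · -- c = w : disjointness violated
      have : c = w := ν.injective h1
      subst this
      exact hsame σ hw hc
    · -- c above w : deduce w ~σ c, so c has both signs
      have hbc : ν b < ν c := hlt.trans h1
      have := (hseo w b c hw.symm.ne h1 hbc σ).2 hw.symm hc
      have hBc : Both c := hboth_of σ this.symm hc.symm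
      have : ν c ≤ ν b := by rw [hνb]; exact hmax c hBc
      exact absurd this (not_le.mpr hbc)
  refine ⟨b, ⟨?_, ?_⟩, hBb.1, hBb.2⟩
  · -- S1
    intro σ x hx y hy hxy
    rcases hx with rfl | hx
    · rcases hy with rfl | hy
      · exact absurd rfl hxy
      · exact hy
    · rcases hy with rfl | hy
      · exact hx.symm
      · have hx' : (G σ).Adj b x := hx
        have hy' : (G σ).Adj b y := hy
        exact (hseo x y b hxy (hbelow σ x hx') (hbelow σ y hy') σ).1 hx'.symm hy'.symm
  · -- S2
    intro σ u w huw hwb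
    have hwlt : ν w < ν b := hbelow σ w hwb.symm
    rcases lt_trichotomy (ν u) (ν b) with h1 | h1 | h1
    · exact (hseo u w b huw.ne h1 hwlt (!σ)).2 huw (by simpa [Bool.not_not] using hwb)
    · have : u = b := ν.injective h1
      subst this
      exact (hsame σ hwb.symm huw).elim
    · have := (hseo b w u hwb.ne.symm h1 (hwlt.trans h1) σ).2 hwb.symm huw.symm
      exact absurd (hbelow σ u this) (not_lt.mpr h1.le)
end

section
/- Let G be a signed graph whose underlying graph is complete. Then G is signed-eliminable if and only if for each sign σ, G_σ contains as an induced subgraph neither a path on four vertices nor a pair of two disjoint edges with no E_σ-edge between them (i.e. G_σ has no induced subgraph on 4 vertices isomorphic to P_4 or to 2K_2). -/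
open SimpleGraph

/-- Nested neighborhoods (vicinal "totality"). -/
private def SGNested {V : Type*} (H : SimpleGraph V) : Prop :=
  ∀ u v : V, u ≠ v →
    (∀ x, H.Adj u x → x ≠ v → H.Adj v x) ∨ (∀ x, H.Adj v x → x ≠ u → H.Adj u x)

/-- A vertex whose neighborhood is a clique and a vertex cover. -/
private def SGGood {V : Type*} (H : SimpleGraph V) (w : V) : Prop :=
  (∀ x y, H.Adj w x → H.Adj w y → x ≠ y → H.Adj x y) ∧
  (∀ x y, H.Adj x y → H.Adj w x ∨ H.Adj w y)

private lemma sg_iso_or_dom {V : Type*} [Fintype V] (H : SimpleGraph V)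
    (hN : SGNested H) (hne : Nonempty V) :
    (∃ z : V, ∀ x, ¬ H.Adj z x) ∨ (∃ d : V, ∀ x, x ≠ d → H.Adj d x) := by
  classical
  by_cases hiso : ∃ z : V, ∀ x, ¬ H.Adj z x
  · exact Or.inl hiso
  push_neg at hiso
  right
  obtain ⟨M, hM⟩ := Finite.exists_max (fun v : V => (H.neighborSet v).ncard)
  refine ⟨M, fun x hx => ?_⟩
  obtain ⟨s, hs⟩ := hiso x
  by_cases hsM : s = M
  · exact (hsM ▸ hs).symm
  rcases hN s M hsM with h | h
  · exact h x hs.symm hx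
  · -- N(M) \ {s} ⊆ N(s) \ {M}, conclude equality by cardinality
    have hsub : H.neighborSet M \ {s} ⊆ H.neighborSet s \ {M} := by
      rintro z ⟨hz, hzs⟩
      have hzs' : z ≠ s := hzs
      have hz' : H.Adj M z := hz
      exact ⟨h z hz' hzs', fun hzM => H.irrefl ((Set.mem_singleton_iff.mp hzM) ▸ hz')⟩
    have hcard : (H.neighborSet s \ {M}).ncard ≤ (H.neighborSet M \ {s}).ncard := by
      by_cases hMs : M ∈ H.neighborSet s
      · have h1 : s ∈ H.neighborSet M := H.adj_symm hMs
        rw [Set.ncard_diff_singleton_of_mem hMs, Set.ncard_diff_singleton_of_mem h1]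
        exact Nat.sub_le_sub_right (hM s) 1
      · have h1 : s ∉ H.neighborSet M := fun hc => hMs hc.symm
        rw [Set.diff_singleton_eq_self hMs, Set.diff_singleton_eq_self h1]
        exact hM s
    have heq := Set.eq_of_subset_of_ncard_le hsub hcard
    have hxmem : x ∈ H.neighborSet s \ {M} := ⟨hs.symm, hx⟩
    rw [← heq] at hxmem
    exact hxmem.1

private lemma sg_exists_good : ∀ (n : ℕ) {V : Type u} [Fintype V] (H : SimpleGraph V),
    Fintype.card V ≤ n → SGNested H → Nonempty V → ∃ w, SGGood H w := by
  intro n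
  induction n with
  | zero =>
    intro V _ H hc _ hne
    exact absurd hc (by simp [Fintype.card_pos.ne'])
  | succ n ih =>
    intro V _ H hc hN hne
    classical
    rcases sg_iso_or_dom H hN hne with ⟨z, hz⟩ | ⟨d, hd⟩
    · -- isolated vertex z
      by_cases hV' : Nonempty {x : V // x ≠ z}
      · have hN' : SGNested (H.comap (Subtype.val : {x : V // x ≠ z} → V)) := by
          intro u v huv
          have : (u : V) ≠ v := fun h => huv (Subtype.ext h)
          rcases hN u.val v.val this with h | h
          · exact Or.inl fun x hx hxv => h x hx (fun he => hxv (Subtype.ext he))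
          · exact Or.inr fun x hx hxu => h x hx (fun he => hxu (Subtype.ext he))
        have hcard : Fintype.card {x : V // x ≠ z} ≤ n := by
          have h2 : Fintype.card {x : V // x ≠ z} < Fintype.card V :=
            Fintype.card_subtype_lt (x := z) (by simp)
          omega
        obtain ⟨w', hclq, hcov⟩ := ih _ hcard hN' hV'
        refine ⟨w'.val, ⟨fun x y hx hy hxy => ?_, fun x y hxy => ?_⟩⟩
        · have hxz : x ≠ z := fun he => hz w'.val (he ▸ hx).symm
          have hyz : y ≠ z := fun he => hz w'.val (he ▸ hy).symm
          exact hclq ⟨x, hxz⟩ ⟨y, hyz⟩ hx hy (fun he => hxy (congrArg Subtype.val he))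
        · have hxz : x ≠ z := fun he => hz y (he ▸ hxy)
          have hyz : y ≠ z := fun he => hz x (he ▸ hxy.symm)
          exact hcov ⟨x, hxz⟩ ⟨y, hyz⟩ hxy
      · refine ⟨z, ⟨fun x y hx _ _ => absurd hx (hz x), fun x y hxy => ?_⟩⟩
        have hx : x = z := by
          by_contra hc'; exact hV' ⟨⟨x, hc'⟩⟩
        exact absurd hxy (hx ▸ hz y)
    · -- dominating vertex d
      by_cases hV' : Nonempty {x : V // x ≠ d}
      · have hN' : SGNested (H.comap (Subtype.val : {x : V // x ≠ d} → V)) := by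
          intro u v huv
          have : (u : V) ≠ v := fun h => huv (Subtype.ext h)
          rcases hN u.val v.val this with h | h
          · exact Or.inl fun x hx hxv => h x hx (fun he => hxv (Subtype.ext he))
          · exact Or.inr fun x hx hxu => h x hx (fun he => hxu (Subtype.ext he))
        have hcard : Fintype.card {x : V // x ≠ d} ≤ n := by
          have h2 : Fintype.card {x : V // x ≠ d} < Fintype.card V :=
            Fintype.card_subtype_lt (x := d) (by simp)
          omega
        obtain ⟨w', hclq, hcov⟩ := ih _ hcard hN' hV'
        refine ⟨w'.val, ⟨fun x y hx hy hxy => ?_, fun x y hxy => ?_⟩⟩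
        · by_cases hxd : x = d
          · subst hxd
            exact hd y (Ne.symm hxy)
          by_cases hyd : y = d
          · subst hyd
            exact (hd x hxd).symm
          exact hclq ⟨x, hxd⟩ ⟨y, hyd⟩ hx hy (fun he => hxy (congrArg Subtype.val he))
        · by_cases hxd : x = d
          · exact Or.inl (hxd ▸ (hd w'.val w'.property).symm)
          by_cases hyd : y = d
          · exact Or.inr (hyd ▸ (hd w'.val w'.property).symm)
          exact hcov ⟨x, hxd⟩ ⟨y, hyd⟩ hxy
      · refine ⟨d, ⟨fun x y hx _ _ => ?_, fun x y hxy => ?_⟩⟩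
        · have : x = d := by by_contra hc'; exact hV' ⟨⟨x, hc'⟩⟩
          exact absurd (this ▸ hx) H.irrefl
        · have hx : x = d := by by_contra hc'; exact hV' ⟨⟨x, hc'⟩⟩
          have hy : y = d := by by_contra hc'; exact hV' ⟨⟨y, hc'⟩⟩
          exact absurd (hx ▸ hy ▸ hxy) H.irrefl

/-- Extend an equivalence on the complement of `w` by sending `w` last. -/
private def sgExt {V : Type*} {n : ℕ} (w : V) [DecidableEq V]
    (ν' : {x : V // x ≠ w} ≃ Fin n) : V ≃ Fin (n + 1) where
  toFun x := if h : x = w then Fin.last n else (ν' ⟨x, h⟩).castSucc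
  invFun i := if h : i = Fin.last n then w else (ν'.symm (i.castPred h)).val
  left_inv x := by
    by_cases h : x = w
    · simp [h]
    · simp only [dif_neg h]
      rw [dif_neg (Fin.ne_last_of_lt (Fin.castSucc_lt_last _))]
      simp
  right_inv i := by
    by_cases h : i = Fin.last n
    · simp [h]
    · simp only [dif_neg h]
      rw [dif_neg (ν'.symm (i.castPred h)).property]
      simp

private lemma sg_build (n : ℕ) : ∀ {V : Type u} [Fintype V] (G : Bool → SimpleGraph V),
    Fintype.card V = n → SDisjoint G →
    (∀ u v : V, u ≠ v → (G true).Adj u v ∨ (G false).Adj u v) →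
    SGNested (G true) → ∃ ν : V ≃ Fin n, IsSEO G ν := by
  induction n with
  | zero =>
    intro V _ G hc _ _ _
    haveI : IsEmpty V := Fintype.card_eq_zero_iff.mp hc
    exact ⟨Equiv.equivOfIsEmpty V (Fin 0), fun u => isEmptyElim u⟩
  | succ n ih =>
    intro V _ G hc hdisj hcomp hN
    classical
    haveI hne : Nonempty V := Fintype.card_pos_iff.mp (by omega)
    obtain ⟨w, hclq, hcov⟩ := sg_exists_good (Fintype.card V) (G true) le_rfl hN hne
    set V' := {x : V // x ≠ w}
    let G' : Bool → SimpleGraph V' := fun σ => (G σ).comap Subtype.val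
    have hc' : Fintype.card V' = n := by
      have h1 := Fintype.card_subtype_compl (fun x : V => x = w)
      rw [Fintype.card_subtype_eq, hc] at h1
      simpa [V'] using h1
    have hdisj' : SDisjoint G' := fun u v h => hdisj u.val v.val h
    have hcomp' : ∀ u v : V', u ≠ v → (G' true).Adj u v ∨ (G' false).Adj u v :=
      fun u v h => hcomp u.val v.val (fun he => h (Subtype.ext he))
    have hN' : SGNested (G' true) := by
      intro u v huv
      have : (u : V) ≠ v := fun h => huv (Subtype.ext h)
      rcases hN u.val v.val this with h | h
      · exact Or.inl fun x hx hxv => h x hx (fun he => hxv (Subtype.ext he))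
      · exact Or.inr fun x hx hxu => h x hx (fun he => hxu (Subtype.ext he))
    obtain ⟨ν', hseo'⟩ := ih G' hc' hdisj' hcomp' hN'
    refine ⟨sgExt w ν', ?_⟩
    have hνw : sgExt w ν' w = Fin.last n := by simp [sgExt]
    have hνx : ∀ (x : V) (h : x ≠ w), sgExt w ν' x = (ν' ⟨x, h⟩).castSucc := by
      intro x h; simp [sgExt, h]
    -- helpers
    have hfalse_of : ∀ a b : V, a ≠ b → ¬ (G true).Adj a b → (G false).Adj a b := by
      intro a b hab h; rcases hcomp a b hab with h' | h'
      · exact absurd h' h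
      · exact h'
    have hnot_of : ∀ a b : V, (G false).Adj a b → ¬ (G true).Adj a b :=
      fun a b hf ht => hdisj a b ⟨ht, hf⟩
    intro u v w' huv hu hv σ
    by_cases hw' : w' = w
    · subst hw'
      have huw : u ≠ w' := fun he => absurd (he ▸ hu) (lt_irrefl _)
      have hvw : v ≠ w' := fun he => absurd (he ▸ hv) (lt_irrefl _)
      cases σ with
      | true =>
        constructor
        · intro hx hy
          exact hclq u v hx.symm hy.symm huv
        · intro hx hy
          have hy' : (G false).Adj v w' := by simpa using hy
          rcases hcov u v hx with h | h
          · exact h.symm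
          · exact absurd h.symm (hnot_of v w' hy')
      | false =>
        constructor
        · intro hx hy
          refine hfalse_of u v huv (fun hadj => ?_)
          rcases hcov u v hadj with h | h
          · exact hnot_of u w' hx h.symm
          · exact hnot_of v w' hy h.symm
        · intro hx hy
          have hy' : (G true).Adj v w' := by simpa using hy
          refine hfalse_of u w' huw (fun hadj => ?_)
          exact hnot_of u v hx (hclq u v hadj.symm hy'.symm huv)
      
    · have hw'lt : sgExt w ν' w' = (ν' ⟨w', hw'⟩).castSucc := hνx w' hw'
      have huW : u ≠ w := by
        intro he
        rw [he, hνw, hw'lt] at hu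
        exact absurd (lt_trans hu (Fin.castSucc_lt_last _)) (lt_irrefl _)
      have hvW : v ≠ w := by
        intro he
        rw [he, hνw, hw'lt] at hv
        exact absurd (lt_trans hv (Fin.castSucc_lt_last _)) (lt_irrefl _)
      have hu' : ν' ⟨u, huW⟩ < ν' ⟨w', hw'⟩ := by
        rw [hνx u huW, hw'lt] at hu
        exact Fin.castSucc_lt_castSucc_iff.mp hu
      have hv' : ν' ⟨v, hvW⟩ < ν' ⟨w', hw'⟩ := by
        rw [hνx v hvW, hw'lt] at hv
        exact Fin.castSucc_lt_castSucc_iff.mp hv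
      exact hseo' ⟨u, huW⟩ ⟨v, hvW⟩ ⟨w', hw'⟩
        (fun he => huv (congrArg Subtype.val he)) hu' hv' σ

private lemma sg_max_four (a b c d : ℕ) (hab : a ≠ b) (hac : a ≠ c) (had : a ≠ d)
    (hbc : b ≠ c) (hbd : b ≠ d) (hcd : c ≠ d) :
    (b < a ∧ c < a ∧ d < a) ∨ (a < b ∧ c < b ∧ d < b) ∨
    (a < c ∧ b < c ∧ d < c) ∨ (a < d ∧ b < d ∧ c < d) := by omega

theorem statement_19 {V : Type*} [Fintype V] (G : Bool → SimpleGraph V) (hdisj : SDisjoint G)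
    (hcomplete : ∀ u v : V, u ≠ v → (G true).Adj u v ∨ (G false).Adj u v) :
    SignedEliminable G ↔
      ∀ σ : Bool,
        (¬ ∃ a b c d : V, a ≠ b ∧ a ≠ c ∧ a ≠ d ∧ b ≠ c ∧ b ≠ d ∧ c ≠ d ∧
          (G σ).Adj a b ∧ (G σ).Adj b c ∧ (G σ).Adj c d ∧
          ¬ (G σ).Adj a c ∧ ¬ (G σ).Adj a d ∧ ¬ (G σ).Adj b d) ∧
        (¬ ∃ a b c d : V, a ≠ b ∧ a ≠ c ∧ a ≠ d ∧ b ≠ c ∧ b ≠ d ∧ c ≠ d ∧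
          (G σ).Adj a b ∧ (G σ).Adj c d ∧
          ¬ (G σ).Adj a c ∧ ¬ (G σ).Adj a d ∧ ¬ (G σ).Adj b c ∧ ¬ (G σ).Adj b d) := by
  have hcompl' : ∀ (σ : Bool) (a b : V), a ≠ b → ¬ (G σ).Adj a b → (G (!σ)).Adj a b := by
    intro σ a b hab h
    cases σ with
    | true => rcases hcomplete a b hab with h' | h'; exact absurd h' h; exact h'
    | false => rcases hcomplete a b hab with h' | h'; exact h'; exact absurd h' h
  have hdisj' : ∀ (σ : Bool) (a b : V), (G σ).Adj a b → ¬ (G (!σ)).Adj a b := by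
    intro σ a b h h'
    cases σ with
    | true => exact hdisj a b ⟨h, h'⟩
    | false => exact hdisj a b ⟨h', h⟩
  constructor
  · rintro ⟨n, ν, hseo⟩ σ
    have hne : ∀ {a b : V}, a ≠ b → ((ν a : ℕ) ≠ (ν b : ℕ)) := by
      intro a b hab h
      exact hab (ν.injective (Fin.ext h))
    constructor
    · rintro ⟨a, b, c, d, hab, hac, had, hbc, hbd, hcd, h1, h2, h3, n1, n2, n3⟩
      rcases sg_max_four (ν a) (ν b) (ν c) (ν d) (hne hab) (hne hac) (hne had)
          (hne hbc) (hne hbd) (hne hcd) with ⟨p1, p2, p3⟩ | ⟨p1, p2, p3⟩ |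
          ⟨p1, p2, p3⟩ | ⟨p1, p2, p3⟩
      · -- max a : E2 with (d, c, a)
        have := (hseo d c a (Ne.symm hcd) p3 p2 σ).2 h3.symm
          (hcompl' σ c a (Ne.symm hac) (fun h => n1 h.symm))
        exact n2 this.symm
      · -- max b : E1 with (a, c, b)
        exact n1 ((hseo a c b hac p1 p2 σ).1 h1 h2.symm)
      · -- max c : E1 with (b, d, c)
        exact n3 ((hseo b d c hbd p2 p3 σ).1 h2 h3.symm)
      · -- max d : E2 with (a, b, d)
        exact n2 ((hseo a b d hab p1 p2 σ).2 h1 (hcompl' σ b d hbd n3))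
    · rintro ⟨a, b, c, d, hab, hac, had, hbc, hbd, hcd, h1, h2, n1, n2, n3, n4⟩
      rcases sg_max_four (ν a) (ν b) (ν c) (ν d) (hne hab) (hne hac) (hne had)
          (hne hbc) (hne hbd) (hne hcd) with ⟨p1, p2, p3⟩ | ⟨p1, p2, p3⟩ |
          ⟨p1, p2, p3⟩ | ⟨p1, p2, p3⟩
      · exact n1 ((hseo c d a (hcd) p2 p3 σ).2 h2
          (hcompl' σ d a (Ne.symm had) (fun h => n2 h.symm))).symm
      · exact n3 ((hseo c d b (hcd) p2 p3 σ).2 h2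
          (hcompl' σ d b (Ne.symm hbd) (fun h => n4 h.symm))).symm
      · exact n1 ((hseo a b c hab p1 p2 σ).2 h1
          (hcompl' σ b c hbc n3))
      · exact n2 ((hseo a b d hab p1 p2 σ).2 h1
          (hcompl' σ b d hbd n4))
  · intro hfree
    -- derive nestedness of G true
    have hN : SGNested (G true) := by
      intro u v huv
      by_contra hcon
      push_neg at hcon
      obtain ⟨⟨x, hux, hxv, hnvx⟩, ⟨y, hvy, hyu, hnuy⟩⟩ := hcon
      have hxu : x ≠ u := fun h => (G true).irrefl (h ▸ hux)
      have hyv : y ≠ v := fun h => (G true).irrefl (h ▸ hvy)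
      have hxy : x ≠ y := fun h => hnvx (h ▸ hvy)
      have hnt : ∀ a b : V, a ≠ b → ¬ (G true).Adj a b → (G false).Adj a b :=
        fun a b h1 h2 => hcompl' true a b h1 h2
      have hnf : ∀ a b : V, (G true).Adj a b → ¬ (G false).Adj a b :=
        fun a b h => hdisj' true a b h
      by_cases huvadj : (G true).Adj u v
      · by_cases hxyadj : (G true).Adj x y
        · -- C4 : u-v-y-x-u ; gives 2K2 in G false on pairs (u,y),(v,x)
          exact (hfree false).2 ⟨u, y, v, x, hyu.symm, huv, hxu.symm, hyv, hxy.symm,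
            (fun h => hxv h.symm), hnt u y hyu.symm hnuy,
            hnt v x (fun h => hxv h.symm) hnvx,
            hnf u v huvadj, hnf u x hux, (fun h => hnf v y hvy h.symm),
            (fun h => hnf x y hxyadj h.symm)⟩
        · -- P4 : x-u-v-y
          exact (hfree true).1 ⟨x, u, v, y, hxu, hxv, hxy, huv, (fun h => hyu h.symm),
            hyv.symm, hux.symm, huvadj, hvy,
            (fun h => hnvx h.symm), hxyadj, hnuy⟩
      · by_cases hxyadj : (G true).Adj x y
        · -- P4 : u-x-y-v
          exact (hfree true).1 ⟨u, x, y, v, (fun h => hxu h.symm), (fun h => hyu h.symm),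
            huv, hxy, hxv, hyv, hux, hxyadj, hvy.symm, hnuy, huvadj,
            (fun h => hnvx h.symm)⟩
        · -- 2K2 : (u,x), (v,y)
          exact (hfree true).2 ⟨u, x, v, y, (fun h => hxu h.symm), huv,
            (fun h => hyu h.symm), hxv, hxy, hyv.symm,
            hux, hvy, huvadj, hnuy, (fun h => hnvx h.symm), hxyadj⟩
    obtain ⟨ν, hseo⟩ := sg_build (Fintype.card V) G rfl hdisj hcomplete hN
    exact ⟨Fintype.card V, ν, hseo⟩
end
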